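/- Let X and Y be real vector spaces. A function f : X → Y satisfies the mixed functional equation (1.5) if and only if there exist a symmetric bi-additive function Q₁ : X × X → Y (i.e. Q₁(x,y) = Q₁(y,x) and Q₁ is additive in each variable), a symmetric tri-additive function C : X × X × X → Y (i.e. C is invariant under permutations of its arguments and additive in each variable), and a symmetric multi-additive function Q₂ : X × X × X × X → Y (invariant under permutations of its arguments and additive in each variable), such that f(x) = Q₁(x,x) + C(x,x,x) + Q₂(x,x,x,x) for all x ∈ X; moreover, in this case Q₁, C and Q₂ are unique. -/

import Mathlib

open Filter Topology

/-- The mixed quadratic-cubic-quartic functional equation (1.5). -/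
def MixedEq {X Y : Type*} [AddCommGroup X] [AddCommGroup Y] (f : X → Y) : Prop :=
  ∀ x y : X, 3 • (f (x + 2 • y) + f (x - 2 • y)) =
    12 • (f (x + y) + f (x - y)) + 4 • f (3 • y) - 18 • f (2 • y) + 36 • f y - 18 • f x

/-- The difference operator D_f. -/
def Dop {X Y : Type*} [AddCommGroup X] [AddCommGroup Y] (f : X → Y) (x y : X) : Y :=
  3 • (f (x + 2 • y) + f (x - 2 • y)) - 12 • (f (x + y) + f (x - y))
    - 4 • f (3 • y) + 18 • f (2 • y) - 36 • f y + 18 • f x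

/-- Quadratic functional equation. -/
def IsQuadratic {X Y : Type*} [AddCommGroup X] [AddCommGroup Y] (g : X → Y) : Prop :=
  ∀ x y : X, g (x + y) + g (x - y) = 2 • g x + 2 • g y

/-- Cubic functional equation. -/
def IsCubic {X Y : Type*} [AddCommGroup X] [AddCommGroup Y] (c : X → Y) : Prop :=
  ∀ x y : X, c (2 • x + y) + c (2 • x - y) = 2 • c (x + y) + 2 • c (x - y) + 12 • c x

/-- Quartic functional equation. -/
def IsQuartic {X Y : Type*} [AddCommGroup X] [AddCommGroup Y] (q : X → Y) : Prop :=
  ∀ x y : X, q (2 • x + y) + q (2 • x - y) = 4 • (q (x + y) + q (x - y)) + 24 • q x - 6 • q y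

/-- A symmetric bi-additive map. -/
def SymBiAdd {X Y : Type*} [AddCommGroup X] [AddCommGroup Y] (B : X → X → Y) : Prop :=
  (∀ x y, B x y = B y x) ∧
  (∀ x x' y, B (x + x') y = B x y + B x' y) ∧
  (∀ x y y', B x (y + y') = B x y + B x y')

/-- A symmetric tri-additive map (invariant under permutations, additive in each variable). -/
def SymTriAdd {X Y : Type*} [AddCommGroup X] [AddCommGroup Y] (C : X → X → X → Y) : Prop :=
  (∀ x y z, C x y z = C y x z) ∧
  (∀ x y z, C x y z = C x z y) ∧
  (∀ x x' y z, C (x + x') y z = C x y z + C x' y z) ∧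
  (∀ x y y' z, C x (y + y') z = C x y z + C x y' z) ∧
  (∀ x y z z', C x y (z + z') = C x y z + C x y z')

/-- A symmetric quadri-additive map (invariant under permutations, additive in each variable). -/
def SymQuadAdd {X Y : Type*} [AddCommGroup X] [AddCommGroup Y] (Q : X → X → X → X → Y) : Prop :=
  (∀ x y z w, Q x y z w = Q y x z w) ∧
  (∀ x y z w, Q x y z w = Q x z y w) ∧
  (∀ x y z w, Q x y z w = Q x y w z) ∧
  (∀ x x' y z w, Q (x + x') y z w = Q x y z w + Q x' y z w) ∧
  (∀ x y y' z w, Q x (y + y') z w = Q x y z w + Q x y' z w) ∧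
  (∀ x y z z' w, Q x y (z + z') w = Q x y z w + Q x y z' w) ∧
  (∀ x y z w w', Q x y z (w + w') = Q x y z w + Q x y z w')


set_option linter.unusedSectionVars false
set_option linter.unusedVariables false
set_option maxHeartbeats 2000000

section Gen
variable {X Y : Type*} [AddCommGroup X] [Module ℝ X] [AddCommGroup Y] [Module ℝ Y]

theorem cubic_of_mixed_odd {f : X → Y} (hm : MixedEq f) (hodd : ∀ v : X, f (-v) = - f v)
    (hz : f 0 = 0) : IsCubic f := by
  intro x y
  rw [show (2 • x + y : X) = (2:ℤ) • x + y by module,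
      show (2 • x - y : X) = (2:ℤ) • x - y by module]
  have i0 := hm (0 : X) (-(x))
  rw [show ((0 : X) + 2 • (-(x)) : X) = -((2:ℤ) • x) by module] at i0
  rw [show ((0 : X) - 2 • (-(x)) : X) = (2:ℤ) • x by module] at i0
  rw [show ((0 : X) + (-(x)) : X) = -(x) by module] at i0
  rw [show ((0 : X) - (-(x)) : X) = x by module] at i0
  rw [show (3 • (-(x)) : X) = -((3:ℤ) • x) by module] at i0
  rw [show (2 • (-(x)) : X) = -((2:ℤ) • x) by module] at i0
  rw [hodd (x)] at i0
  rw [hodd ((2:ℤ) • x)] at i0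
  rw [hodd ((3:ℤ) • x)] at i0
  rw [hz] at i0
  have i1 := hm (0 : X) (-(y))
  rw [show ((0 : X) + 2 • (-(y)) : X) = -((2:ℤ) • y) by module] at i1
  rw [show ((0 : X) - 2 • (-(y)) : X) = (2:ℤ) • y by module] at i1
  rw [show ((0 : X) + (-(y)) : X) = -(y) by module] at i1
  rw [show ((0 : X) - (-(y)) : X) = y by module] at i1
  rw [show (3 • (-(y)) : X) = -((3:ℤ) • y) by module] at i1
  rw [show (2 • (-(y)) : X) = -((2:ℤ) • y) by module] at i1
  rw [hodd (y)] at i1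
  rw [hodd ((2:ℤ) • y)] at i1
  rw [hodd ((3:ℤ) • y)] at i1
  rw [hz] at i1
  have i2 := hm (-(x)) (-(x))
  rw [show ((-(x)) + 2 • (-(x)) : X) = -((3:ℤ) • x) by module] at i2
  rw [show ((-(x)) - 2 • (-(x)) : X) = x by module] at i2
  rw [show ((-(x)) + (-(x)) : X) = -((2:ℤ) • x) by module] at i2
  rw [show ((-(x)) - (-(x)) : X) = (0 : X) by module] at i2
  rw [show (3 • (-(x)) : X) = -((3:ℤ) • x) by module] at i2
  rw [show (2 • (-(x)) : X) = -((2:ℤ) • x) by module] at i2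
  rw [hodd (x)] at i2
  rw [hodd ((2:ℤ) • x)] at i2
  rw [hodd ((3:ℤ) • x)] at i2
  rw [hz] at i2
  have i3 := hm (-(x)) (-(y))
  rw [show ((-(x)) + 2 • (-(y)) : X) = -(x + (2:ℤ) • y) by module] at i3
  rw [show ((-(x)) - 2 • (-(y)) : X) = -(x - (2:ℤ) • y) by module] at i3
  rw [show ((-(x)) + (-(y)) : X) = -(x + y) by module] at i3
  rw [show ((-(x)) - (-(y)) : X) = -(x - y) by module] at i3
  rw [show (3 • (-(y)) : X) = -((3:ℤ) • y) by module] at i3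
  rw [show (2 • (-(y)) : X) = -((2:ℤ) • y) by module] at i3
  rw [hodd (y)] at i3
  rw [hodd ((2:ℤ) • y)] at i3
  rw [hodd ((3:ℤ) • y)] at i3
  rw [hodd (x - (2:ℤ) • y)] at i3
  rw [hodd (x - y)] at i3
  rw [hodd (x)] at i3
  rw [hodd (x + y)] at i3
  rw [hodd (x + (2:ℤ) • y)] at i3
  have i4 := hm (0 : X) (-(x + y))
  rw [show ((0 : X) + 2 • (-(x + y)) : X) = -((2:ℤ) • x + (2:ℤ) • y) by module] at i4
  rw [show ((0 : X) - 2 • (-(x + y)) : X) = (2:ℤ) • x + (2:ℤ) • y by module] at i4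
  rw [show ((0 : X) + (-(x + y)) : X) = -(x + y) by module] at i4
  rw [show ((0 : X) - (-(x + y)) : X) = x + y by module] at i4
  rw [show (3 • (-(x + y)) : X) = -((3:ℤ) • x + (3:ℤ) • y) by module] at i4
  rw [show (2 • (-(x + y)) : X) = -((2:ℤ) • x + (2:ℤ) • y) by module] at i4
  rw [hodd (x + y)] at i4
  rw [hodd ((2:ℤ) • x + (2:ℤ) • y)] at i4
  rw [hodd ((3:ℤ) • x + (3:ℤ) • y)] at i4
  rw [hz] at i4
  have i5 := hm (0 : X) (-(x - y))
  rw [show ((0 : X) + 2 • (-(x - y)) : X) = -((2:ℤ) • x - (2:ℤ) • y) by module] at i5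
  rw [show ((0 : X) - 2 • (-(x - y)) : X) = (2:ℤ) • x - (2:ℤ) • y by module] at i5
  rw [show ((0 : X) + (-(x - y)) : X) = -(x - y) by module] at i5
  rw [show ((0 : X) - (-(x - y)) : X) = x - y by module] at i5
  rw [show (3 • (-(x - y)) : X) = -((3:ℤ) • x - (3:ℤ) • y) by module] at i5
  rw [show (2 • (-(x - y)) : X) = -((2:ℤ) • x - (2:ℤ) • y) by module] at i5
  rw [hodd (x - y)] at i5
  rw [hodd ((2:ℤ) • x - (2:ℤ) • y)] at i5
  rw [hodd ((3:ℤ) • x - (3:ℤ) • y)] at i5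
  rw [hz] at i5
  have i6 := hm (-((2:ℤ) • x)) (-(y))
  rw [show ((-((2:ℤ) • x)) + 2 • (-(y)) : X) = -((2:ℤ) • x + (2:ℤ) • y) by module] at i6
  rw [show ((-((2:ℤ) • x)) - 2 • (-(y)) : X) = -((2:ℤ) • x - (2:ℤ) • y) by module] at i6
  rw [show ((-((2:ℤ) • x)) + (-(y)) : X) = -((2:ℤ) • x + y) by module] at i6
  rw [show ((-((2:ℤ) • x)) - (-(y)) : X) = -((2:ℤ) • x - y) by module] at i6
  rw [show (3 • (-(y)) : X) = -((3:ℤ) • y) by module] at i6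
  rw [show (2 • (-(y)) : X) = -((2:ℤ) • y) by module] at i6
  rw [hodd (y)] at i6
  rw [hodd ((2:ℤ) • y)] at i6
  rw [hodd ((3:ℤ) • y)] at i6
  rw [hodd ((2:ℤ) • x - (2:ℤ) • y)] at i6
  rw [hodd ((2:ℤ) • x - y)] at i6
  rw [hodd ((2:ℤ) • x)] at i6
  rw [hodd ((2:ℤ) • x + y)] at i6
  rw [hodd ((2:ℤ) • x + (2:ℤ) • y)] at i6
  have i7 := hm (-(y)) (-(x + y))
  rw [show ((-(y)) + 2 • (-(x + y)) : X) = -((2:ℤ) • x + (3:ℤ) • y) by module] at i7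
  rw [show ((-(y)) - 2 • (-(x + y)) : X) = (2:ℤ) • x + y by module] at i7
  rw [show ((-(y)) + (-(x + y)) : X) = -(x + (2:ℤ) • y) by module] at i7
  rw [show ((-(y)) - (-(x + y)) : X) = x by module] at i7
  rw [show (3 • (-(x + y)) : X) = -((3:ℤ) • x + (3:ℤ) • y) by module] at i7
  rw [show (2 • (-(x + y)) : X) = -((2:ℤ) • x + (2:ℤ) • y) by module] at i7
  rw [hodd (y)] at i7
  rw [hodd (x + y)] at i7
  rw [hodd (x + (2:ℤ) • y)] at i7
  rw [hodd ((2:ℤ) • x + (2:ℤ) • y)] at i7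
  rw [hodd ((2:ℤ) • x + (3:ℤ) • y)] at i7
  rw [hodd ((3:ℤ) • x + (3:ℤ) • y)] at i7
  have i8 := hm (-(y)) (-(x - y))
  rw [show ((-(y)) + 2 • (-(x - y)) : X) = -((2:ℤ) • x - y) by module] at i8
  rw [show ((-(y)) - 2 • (-(x - y)) : X) = (2:ℤ) • x - (3:ℤ) • y by module] at i8
  rw [show ((-(y)) + (-(x - y)) : X) = -(x) by module] at i8
  rw [show ((-(y)) - (-(x - y)) : X) = x - (2:ℤ) • y by module] at i8
  rw [show (3 • (-(x - y)) : X) = -((3:ℤ) • x - (3:ℤ) • y) by module] at i8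
  rw [show (2 • (-(x - y)) : X) = -((2:ℤ) • x - (2:ℤ) • y) by module] at i8
  rw [hodd (y)] at i8
  rw [hodd (x - y)] at i8
  rw [hodd (x)] at i8
  rw [hodd ((2:ℤ) • x - (2:ℤ) • y)] at i8
  rw [hodd ((2:ℤ) • x - y)] at i8
  rw [hodd ((3:ℤ) • x - (3:ℤ) • y)] at i8
  have i9 := hm (-((2:ℤ) • x + y)) (-(y))
  rw [show ((-((2:ℤ) • x + y)) + 2 • (-(y)) : X) = -((2:ℤ) • x + (3:ℤ) • y) by module] at i9
  rw [show ((-((2:ℤ) • x + y)) - 2 • (-(y)) : X) = -((2:ℤ) • x - y) by module] at i9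
  rw [show ((-((2:ℤ) • x + y)) + (-(y)) : X) = -((2:ℤ) • x + (2:ℤ) • y) by module] at i9
  rw [show ((-((2:ℤ) • x + y)) - (-(y)) : X) = -((2:ℤ) • x) by module] at i9
  rw [show (3 • (-(y)) : X) = -((3:ℤ) • y) by module] at i9
  rw [show (2 • (-(y)) : X) = -((2:ℤ) • y) by module] at i9
  rw [hodd (y)] at i9
  rw [hodd ((2:ℤ) • y)] at i9
  rw [hodd ((3:ℤ) • y)] at i9
  rw [hodd ((2:ℤ) • x - y)] at i9
  rw [hodd ((2:ℤ) • x)] at i9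
  rw [hodd ((2:ℤ) • x + y)] at i9
  rw [hodd ((2:ℤ) • x + (2:ℤ) • y)] at i9
  rw [hodd ((2:ℤ) • x + (3:ℤ) • y)] at i9
  have i10 := hm (-((2:ℤ) • x - y)) (-(y))
  rw [show ((-((2:ℤ) • x - y)) + 2 • (-(y)) : X) = -((2:ℤ) • x + y) by module] at i10
  rw [show ((-((2:ℤ) • x - y)) - 2 • (-(y)) : X) = -((2:ℤ) • x - (3:ℤ) • y) by module] at i10
  rw [show ((-((2:ℤ) • x - y)) + (-(y)) : X) = -((2:ℤ) • x) by module] at i10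
  rw [show ((-((2:ℤ) • x - y)) - (-(y)) : X) = -((2:ℤ) • x - (2:ℤ) • y) by module] at i10
  rw [show (3 • (-(y)) : X) = -((3:ℤ) • y) by module] at i10
  rw [show (2 • (-(y)) : X) = -((2:ℤ) • y) by module] at i10
  rw [hodd (y)] at i10
  rw [hodd ((2:ℤ) • y)] at i10
  rw [hodd ((3:ℤ) • y)] at i10
  rw [hodd ((2:ℤ) • x - (3:ℤ) • y)] at i10
  rw [hodd ((2:ℤ) • x - (2:ℤ) • y)] at i10
  rw [hodd ((2:ℤ) • x - y)] at i10
  rw [hodd ((2:ℤ) • x)] at i10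
  rw [hodd ((2:ℤ) • x + y)] at i10
  linear_combination (norm := module) ((1 : ℝ)/3) • i0 + ((-1 : ℝ)/12) • i1 + ((-4 : ℝ)/3) • i2 + ((-1 : ℝ)/6) • i3 + ((1 : ℝ)/24) • i4 + ((-1 : ℝ)/24) • i5 + ((1 : ℝ)/6) • i6 + ((-1 : ℝ)/24) • i7 + ((1 : ℝ)/24) • i8 + ((1 : ℝ)/24) • i9 + ((1 : ℝ)/24) • i10

theorem quadpart_of_mixed_even {f : X → Y} (hm : MixedEq f) (hev : ∀ v : X, f (-v) = f v)
    (hz : f 0 = 0) :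
    ∀ x y : X, f ((2:ℤ) • x + (2:ℤ) • y) + f ((2:ℤ) • x - (2:ℤ) • y)
      - (2:ℝ) • f ((2:ℤ) • x) - (2:ℝ) • f ((2:ℤ) • y)
      = (16:ℝ) • (f (x + y) + f (x - y) - (2:ℝ) • f x - (2:ℝ) • f y) := by
  intro x y
  have i0 := hm (0 : X) (-(x))
  rw [show ((0 : X) + 2 • (-(x)) : X) = -((2:ℤ) • x) by module] at i0
  rw [show ((0 : X) - 2 • (-(x)) : X) = (2:ℤ) • x by module] at i0
  rw [show ((0 : X) + (-(x)) : X) = -(x) by module] at i0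
  rw [show ((0 : X) - (-(x)) : X) = x by module] at i0
  rw [show (3 • (-(x)) : X) = -((3:ℤ) • x) by module] at i0
  rw [show (2 • (-(x)) : X) = -((2:ℤ) • x) by module] at i0
  rw [hev (x)] at i0
  rw [hev ((2:ℤ) • x)] at i0
  rw [hev ((3:ℤ) • x)] at i0
  rw [hz] at i0
  have i1 := hm (0 : X) (-(y))
  rw [show ((0 : X) + 2 • (-(y)) : X) = -((2:ℤ) • y) by module] at i1
  rw [show ((0 : X) - 2 • (-(y)) : X) = (2:ℤ) • y by module] at i1
  rw [show ((0 : X) + (-(y)) : X) = -(y) by module] at i1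
  rw [show ((0 : X) - (-(y)) : X) = y by module] at i1
  rw [show (3 • (-(y)) : X) = -((3:ℤ) • y) by module] at i1
  rw [show (2 • (-(y)) : X) = -((2:ℤ) • y) by module] at i1
  rw [hev (y)] at i1
  rw [hev ((2:ℤ) • y)] at i1
  rw [hev ((3:ℤ) • y)] at i1
  rw [hz] at i1
  have i2 := hm (-(y)) (-(x))
  rw [show ((-(y)) + 2 • (-(x)) : X) = -((2:ℤ) • x + y) by module] at i2
  rw [show ((-(y)) - 2 • (-(x)) : X) = (2:ℤ) • x - y by module] at i2
  rw [show ((-(y)) + (-(x)) : X) = -(x + y) by module] at i2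
  rw [show ((-(y)) - (-(x)) : X) = x - y by module] at i2
  rw [show (3 • (-(x)) : X) = -((3:ℤ) • x) by module] at i2
  rw [show (2 • (-(x)) : X) = -((2:ℤ) • x) by module] at i2
  rw [hev (y)] at i2
  rw [hev (x)] at i2
  rw [hev (x + y)] at i2
  rw [hev ((2:ℤ) • x)] at i2
  rw [hev ((2:ℤ) • x + y)] at i2
  rw [hev ((3:ℤ) • x)] at i2
  have i3 := hm (-((2:ℤ) • x)) (-(y))
  rw [show ((-((2:ℤ) • x)) + 2 • (-(y)) : X) = -((2:ℤ) • x + (2:ℤ) • y) by module] at i3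
  rw [show ((-((2:ℤ) • x)) - 2 • (-(y)) : X) = -((2:ℤ) • x - (2:ℤ) • y) by module] at i3
  rw [show ((-((2:ℤ) • x)) + (-(y)) : X) = -((2:ℤ) • x + y) by module] at i3
  rw [show ((-((2:ℤ) • x)) - (-(y)) : X) = -((2:ℤ) • x - y) by module] at i3
  rw [show (3 • (-(y)) : X) = -((3:ℤ) • y) by module] at i3
  rw [show (2 • (-(y)) : X) = -((2:ℤ) • y) by module] at i3
  rw [hev (y)] at i3
  rw [hev ((2:ℤ) • y)] at i3
  rw [hev ((3:ℤ) • y)] at i3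
  rw [hev ((2:ℤ) • x - (2:ℤ) • y)] at i3
  rw [hev ((2:ℤ) • x - y)] at i3
  rw [hev ((2:ℤ) • x)] at i3
  rw [hev ((2:ℤ) • x + y)] at i3
  rw [hev ((2:ℤ) • x + (2:ℤ) • y)] at i3
  linear_combination (norm := module) ((-4 : ℝ)/3) • i0 + ((-1 : ℝ)/3) • i1 + ((4 : ℝ)/3) • i2 + ((1 : ℝ)/3) • i3

theorem quartpart_of_mixed_even {f : X → Y} (hm : MixedEq f) (hev : ∀ v : X, f (-v) = f v)
    (hz : f 0 = 0) :
    ∀ x y : X, f ((4:ℤ) • x + (2:ℤ) • y) + f ((4:ℤ) • x - (2:ℤ) • y)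
      - (4:ℝ) • f ((2:ℤ) • x + (2:ℤ) • y) - (4:ℝ) • f ((2:ℤ) • x - (2:ℤ) • y)
      - (24:ℝ) • f ((2:ℤ) • x) + (6:ℝ) • f ((2:ℤ) • y)
      = (4:ℝ) • (f ((2:ℤ) • x + y) + f ((2:ℤ) • x - y) - (4:ℝ) • f (x + y) - (4:ℝ) • f (x - y)
          - (24:ℝ) • f x + (6:ℝ) • f y) := by
  intro x y
  have i0 := hm (0 : X) (-(x))
  rw [show ((0 : X) + 2 • (-(x)) : X) = -((2:ℤ) • x) by module] at i0
  rw [show ((0 : X) - 2 • (-(x)) : X) = (2:ℤ) • x by module] at i0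
  rw [show ((0 : X) + (-(x)) : X) = -(x) by module] at i0
  rw [show ((0 : X) - (-(x)) : X) = x by module] at i0
  rw [show (3 • (-(x)) : X) = -((3:ℤ) • x) by module] at i0
  rw [show (2 • (-(x)) : X) = -((2:ℤ) • x) by module] at i0
  rw [hev (x)] at i0
  rw [hev ((2:ℤ) • x)] at i0
  rw [hev ((3:ℤ) • x)] at i0
  rw [hz] at i0
  have i1 := hm (0 : X) (-(y))
  rw [show ((0 : X) + 2 • (-(y)) : X) = -((2:ℤ) • y) by module] at i1
  rw [show ((0 : X) - 2 • (-(y)) : X) = (2:ℤ) • y by module] at i1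
  rw [show ((0 : X) + (-(y)) : X) = -(y) by module] at i1
  rw [show ((0 : X) - (-(y)) : X) = y by module] at i1
  rw [show (3 • (-(y)) : X) = -((3:ℤ) • y) by module] at i1
  rw [show (2 • (-(y)) : X) = -((2:ℤ) • y) by module] at i1
  rw [hev (y)] at i1
  rw [hev ((2:ℤ) • y)] at i1
  rw [hev ((3:ℤ) • y)] at i1
  rw [hz] at i1
  have i2 := hm (-(y)) (-(x))
  rw [show ((-(y)) + 2 • (-(x)) : X) = -((2:ℤ) • x + y) by module] at i2
  rw [show ((-(y)) - 2 • (-(x)) : X) = (2:ℤ) • x - y by module] at i2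
  rw [show ((-(y)) + (-(x)) : X) = -(x + y) by module] at i2
  rw [show ((-(y)) - (-(x)) : X) = x - y by module] at i2
  rw [show (3 • (-(x)) : X) = -((3:ℤ) • x) by module] at i2
  rw [show (2 • (-(x)) : X) = -((2:ℤ) • x) by module] at i2
  rw [hev (y)] at i2
  rw [hev (x)] at i2
  rw [hev (x + y)] at i2
  rw [hev ((2:ℤ) • x)] at i2
  rw [hev ((2:ℤ) • x + y)] at i2
  rw [hev ((3:ℤ) • x)] at i2
  have i3 := hm (0 : X) (-(x + y))
  rw [show ((0 : X) + 2 • (-(x + y)) : X) = -((2:ℤ) • x + (2:ℤ) • y) by module] at i3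
  rw [show ((0 : X) - 2 • (-(x + y)) : X) = (2:ℤ) • x + (2:ℤ) • y by module] at i3
  rw [show ((0 : X) + (-(x + y)) : X) = -(x + y) by module] at i3
  rw [show ((0 : X) - (-(x + y)) : X) = x + y by module] at i3
  rw [show (3 • (-(x + y)) : X) = -((3:ℤ) • x + (3:ℤ) • y) by module] at i3
  rw [show (2 • (-(x + y)) : X) = -((2:ℤ) • x + (2:ℤ) • y) by module] at i3
  rw [hev (x + y)] at i3
  rw [hev ((2:ℤ) • x + (2:ℤ) • y)] at i3
  rw [hev ((3:ℤ) • x + (3:ℤ) • y)] at i3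
  rw [hz] at i3
  have i4 := hm (0 : X) (-(x - y))
  rw [show ((0 : X) + 2 • (-(x - y)) : X) = -((2:ℤ) • x - (2:ℤ) • y) by module] at i4
  rw [show ((0 : X) - 2 • (-(x - y)) : X) = (2:ℤ) • x - (2:ℤ) • y by module] at i4
  rw [show ((0 : X) + (-(x - y)) : X) = -(x - y) by module] at i4
  rw [show ((0 : X) - (-(x - y)) : X) = x - y by module] at i4
  rw [show (3 • (-(x - y)) : X) = -((3:ℤ) • x - (3:ℤ) • y) by module] at i4
  rw [show (2 • (-(x - y)) : X) = -((2:ℤ) • x - (2:ℤ) • y) by module] at i4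
  rw [hev (x - y)] at i4
  rw [hev ((2:ℤ) • x - (2:ℤ) • y)] at i4
  rw [hev ((3:ℤ) • x - (3:ℤ) • y)] at i4
  rw [hz] at i4
  have i5 := hm (-((2:ℤ) • x)) (-(y))
  rw [show ((-((2:ℤ) • x)) + 2 • (-(y)) : X) = -((2:ℤ) • x + (2:ℤ) • y) by module] at i5
  rw [show ((-((2:ℤ) • x)) - 2 • (-(y)) : X) = -((2:ℤ) • x - (2:ℤ) • y) by module] at i5
  rw [show ((-((2:ℤ) • x)) + (-(y)) : X) = -((2:ℤ) • x + y) by module] at i5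
  rw [show ((-((2:ℤ) • x)) - (-(y)) : X) = -((2:ℤ) • x - y) by module] at i5
  rw [show (3 • (-(y)) : X) = -((3:ℤ) • y) by module] at i5
  rw [show (2 • (-(y)) : X) = -((2:ℤ) • y) by module] at i5
  rw [hev (y)] at i5
  rw [hev ((2:ℤ) • y)] at i5
  rw [hev ((3:ℤ) • y)] at i5
  rw [hev ((2:ℤ) • x - (2:ℤ) • y)] at i5
  rw [hev ((2:ℤ) • x - y)] at i5
  rw [hev ((2:ℤ) • x)] at i5
  rw [hev ((2:ℤ) • x + y)] at i5
  rw [hev ((2:ℤ) • x + (2:ℤ) • y)] at i5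
  have i6 := hm (-(x + y)) (-(x))
  rw [show ((-(x + y)) + 2 • (-(x)) : X) = -((3:ℤ) • x + y) by module] at i6
  rw [show ((-(x + y)) - 2 • (-(x)) : X) = x - y by module] at i6
  rw [show ((-(x + y)) + (-(x)) : X) = -((2:ℤ) • x + y) by module] at i6
  rw [show ((-(x + y)) - (-(x)) : X) = -(y) by module] at i6
  rw [show (3 • (-(x)) : X) = -((3:ℤ) • x) by module] at i6
  rw [show (2 • (-(x)) : X) = -((2:ℤ) • x) by module] at i6
  rw [hev (y)] at i6
  rw [hev (x)] at i6
  rw [hev (x + y)] at i6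
  rw [hev ((2:ℤ) • x)] at i6
  rw [hev ((2:ℤ) • x + y)] at i6
  rw [hev ((3:ℤ) • x)] at i6
  rw [hev ((3:ℤ) • x + y)] at i6
  have i7 := hm (-(x - y)) (-(x))
  rw [show ((-(x - y)) + 2 • (-(x)) : X) = -((3:ℤ) • x - y) by module] at i7
  rw [show ((-(x - y)) - 2 • (-(x)) : X) = x + y by module] at i7
  rw [show ((-(x - y)) + (-(x)) : X) = -((2:ℤ) • x - y) by module] at i7
  rw [show ((-(x - y)) - (-(x)) : X) = y by module] at i7
  rw [show (3 • (-(x)) : X) = -((3:ℤ) • x) by module] at i7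
  rw [show (2 • (-(x)) : X) = -((2:ℤ) • x) by module] at i7
  rw [hev (x - y)] at i7
  rw [hev (x)] at i7
  rw [hev ((2:ℤ) • x - y)] at i7
  rw [hev ((2:ℤ) • x)] at i7
  rw [hev ((3:ℤ) • x - y)] at i7
  rw [hev ((3:ℤ) • x)] at i7
  have i8 := hm (-((2:ℤ) • x)) (-(x + y))
  rw [show ((-((2:ℤ) • x)) + 2 • (-(x + y)) : X) = -((4:ℤ) • x + (2:ℤ) • y) by module] at i8
  rw [show ((-((2:ℤ) • x)) - 2 • (-(x + y)) : X) = (2:ℤ) • y by module] at i8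
  rw [show ((-((2:ℤ) • x)) + (-(x + y)) : X) = -((3:ℤ) • x + y) by module] at i8
  rw [show ((-((2:ℤ) • x)) - (-(x + y)) : X) = -(x - y) by module] at i8
  rw [show (3 • (-(x + y)) : X) = -((3:ℤ) • x + (3:ℤ) • y) by module] at i8
  rw [show (2 • (-(x + y)) : X) = -((2:ℤ) • x + (2:ℤ) • y) by module] at i8
  rw [hev (x - y)] at i8
  rw [hev (x + y)] at i8
  rw [hev ((2:ℤ) • x)] at i8
  rw [hev ((2:ℤ) • x + (2:ℤ) • y)] at i8
  rw [hev ((3:ℤ) • x + y)] at i8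
  rw [hev ((3:ℤ) • x + (3:ℤ) • y)] at i8
  rw [hev ((4:ℤ) • x + (2:ℤ) • y)] at i8
  have i9 := hm (-((2:ℤ) • x)) (-(x - y))
  rw [show ((-((2:ℤ) • x)) + 2 • (-(x - y)) : X) = -((4:ℤ) • x - (2:ℤ) • y) by module] at i9
  rw [show ((-((2:ℤ) • x)) - 2 • (-(x - y)) : X) = -((2:ℤ) • y) by module] at i9
  rw [show ((-((2:ℤ) • x)) + (-(x - y)) : X) = -((3:ℤ) • x - y) by module] at i9
  rw [show ((-((2:ℤ) • x)) - (-(x - y)) : X) = -(x + y) by module] at i9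
  rw [show (3 • (-(x - y)) : X) = -((3:ℤ) • x - (3:ℤ) • y) by module] at i9
  rw [show (2 • (-(x - y)) : X) = -((2:ℤ) • x - (2:ℤ) • y) by module] at i9
  rw [hev ((2:ℤ) • y)] at i9
  rw [hev (x - y)] at i9
  rw [hev (x + y)] at i9
  rw [hev ((2:ℤ) • x - (2:ℤ) • y)] at i9
  rw [hev ((2:ℤ) • x)] at i9
  rw [hev ((3:ℤ) • x - (3:ℤ) • y)] at i9
  rw [hev ((3:ℤ) • x - y)] at i9
  rw [hev ((4:ℤ) • x - (2:ℤ) • y)] at i9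
  linear_combination (norm := module) (-4 : ℝ) • i0 + ((2 : ℝ)/3) • i1 + ((4 : ℝ)/3) • i2 + ((-1 : ℝ)/3) • i3 + ((-1 : ℝ)/3) • i4 + ((-2 : ℝ)/3) • i5 + ((4 : ℝ)/3) • i6 + ((4 : ℝ)/3) • i7 + ((1 : ℝ)/3) • i8 + ((1 : ℝ)/3) • i9

theorem cubicE_quad {f : X → Y} (hc : IsCubic f) (hodd : ∀ v : X, f (-v) = - f v)
    (hz : f 0 = 0) :
    ∀ x y z : X, f (x + y + z) + f (x + y - z) + f (x - y + z) + f (x - y - z)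
      = (2:ℝ) • f (x + y) + (2:ℝ) • f (x - y) + (2:ℝ) • f (x + z) + (2:ℝ) • f (x - z)
        - (4:ℝ) • f x := by
  intro x y z
  have i0 := hc (-(x)) (0 : X)
  rw [show (2 • (-(x)) + (0 : X) : X) = -((2:ℤ) • x) by module] at i0
  rw [show (2 • (-(x)) - (0 : X) : X) = -((2:ℤ) • x) by module] at i0
  rw [show ((-(x)) + (0 : X) : X) = -(x) by module] at i0
  rw [show ((-(x)) - (0 : X) : X) = -(x) by module] at i0
  rw [hodd (x)] at i0
  rw [hodd ((2:ℤ) • x)] at i0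
  have i1 := hc (-(z)) (0 : X)
  rw [show (2 • (-(z)) + (0 : X) : X) = -((2:ℤ) • z) by module] at i1
  rw [show (2 • (-(z)) - (0 : X) : X) = -((2:ℤ) • z) by module] at i1
  rw [show ((-(z)) + (0 : X) : X) = -(z) by module] at i1
  rw [show ((-(z)) - (0 : X) : X) = -(z) by module] at i1
  rw [hodd (z)] at i1
  rw [hodd ((2:ℤ) • z)] at i1
  have i2 := hc (-(x)) (-(y))
  rw [show (2 • (-(x)) + (-(y)) : X) = -((2:ℤ) • x + y) by module] at i2
  rw [show (2 • (-(x)) - (-(y)) : X) = -((2:ℤ) • x - y) by module] at i2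
  rw [show ((-(x)) + (-(y)) : X) = -(x + y) by module] at i2
  rw [show ((-(x)) - (-(y)) : X) = -(x - y) by module] at i2
  rw [hodd (x - y)] at i2
  rw [hodd (x)] at i2
  rw [hodd (x + y)] at i2
  rw [hodd ((2:ℤ) • x - y)] at i2
  rw [hodd ((2:ℤ) • x + y)] at i2
  have i3 := hc (-(x)) (-(z))
  rw [show (2 • (-(x)) + (-(z)) : X) = -((2:ℤ) • x + z) by module] at i3
  rw [show (2 • (-(x)) - (-(z)) : X) = -((2:ℤ) • x - z) by module] at i3
  rw [show ((-(x)) + (-(z)) : X) = -(x + z) by module] at i3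
  rw [show ((-(x)) - (-(z)) : X) = -(x - z) by module] at i3
  rw [hodd (x - z)] at i3
  rw [hodd (x)] at i3
  rw [hodd (x + z)] at i3
  rw [hodd ((2:ℤ) • x - z)] at i3
  rw [hodd ((2:ℤ) • x + z)] at i3
  have i4 := hc (-(z)) (-(x))
  rw [show (2 • (-(z)) + (-(x)) : X) = -(x + (2:ℤ) • z) by module] at i4
  rw [show (2 • (-(z)) - (-(x)) : X) = x - (2:ℤ) • z by module] at i4
  rw [show ((-(z)) + (-(x)) : X) = -(x + z) by module] at i4
  rw [show ((-(z)) - (-(x)) : X) = x - z by module] at i4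
  rw [hodd (z)] at i4
  rw [hodd (x + z)] at i4
  rw [hodd (x + (2:ℤ) • z)] at i4
  have i5 := hc (-(z)) (-(y))
  rw [show (2 • (-(z)) + (-(y)) : X) = -(y + (2:ℤ) • z) by module] at i5
  rw [show (2 • (-(z)) - (-(y)) : X) = y - (2:ℤ) • z by module] at i5
  rw [show ((-(z)) + (-(y)) : X) = -(y + z) by module] at i5
  rw [show ((-(z)) - (-(y)) : X) = y - z by module] at i5
  rw [hodd (z)] at i5
  rw [hodd (y + z)] at i5
  rw [hodd (y + (2:ℤ) • z)] at i5
  have i6 := hc (-(x)) (-(x + y))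
  rw [show (2 • (-(x)) + (-(x + y)) : X) = -((3:ℤ) • x + y) by module] at i6
  rw [show (2 • (-(x)) - (-(x + y)) : X) = -(x - y) by module] at i6
  rw [show ((-(x)) + (-(x + y)) : X) = -((2:ℤ) • x + y) by module] at i6
  rw [show ((-(x)) - (-(x + y)) : X) = y by module] at i6
  rw [hodd (x - y)] at i6
  rw [hodd (x)] at i6
  rw [hodd ((2:ℤ) • x + y)] at i6
  rw [hodd ((3:ℤ) • x + y)] at i6
  have i7 := hc (-(x)) (-(x - z))
  rw [show (2 • (-(x)) + (-(x - z)) : X) = -((3:ℤ) • x - z) by module] at i7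
  rw [show (2 • (-(x)) - (-(x - z)) : X) = -(x + z) by module] at i7
  rw [show ((-(x)) + (-(x - z)) : X) = -((2:ℤ) • x - z) by module] at i7
  rw [show ((-(x)) - (-(x - z)) : X) = -(z) by module] at i7
  rw [hodd (z)] at i7
  rw [hodd (x)] at i7
  rw [hodd (x + z)] at i7
  rw [hodd ((2:ℤ) • x - z)] at i7
  rw [hodd ((3:ℤ) • x - z)] at i7
  have i8 := hc (-(x)) (-(y - z))
  rw [show (2 • (-(x)) + (-(y - z)) : X) = -((2:ℤ) • x + y - z) by module] at i8
  rw [show (2 • (-(x)) - (-(y - z)) : X) = -((2:ℤ) • x - y + z) by module] at i8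
  rw [show ((-(x)) + (-(y - z)) : X) = -(x + y - z) by module] at i8
  rw [show ((-(x)) - (-(y - z)) : X) = -(x - y + z) by module] at i8
  rw [hodd (x - y + z)] at i8
  rw [hodd (x)] at i8
  rw [hodd (x + y - z)] at i8
  rw [hodd ((2:ℤ) • x - y + z)] at i8
  rw [hodd ((2:ℤ) • x + y - z)] at i8
  have i9 := hc (-(y)) (-(x + y))
  rw [show (2 • (-(y)) + (-(x + y)) : X) = -(x + (3:ℤ) • y) by module] at i9
  rw [show (2 • (-(y)) - (-(x + y)) : X) = x - y by module] at i9
  rw [show ((-(y)) + (-(x + y)) : X) = -(x + (2:ℤ) • y) by module] at i9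
  rw [show ((-(y)) - (-(x + y)) : X) = x by module] at i9
  rw [hodd (y)] at i9
  rw [hodd (x + (2:ℤ) • y)] at i9
  rw [hodd (x + (3:ℤ) • y)] at i9
  have i10 := hc (-(y)) (-(x + z))
  rw [show (2 • (-(y)) + (-(x + z)) : X) = -(x + (2:ℤ) • y + z) by module] at i10
  rw [show (2 • (-(y)) - (-(x + z)) : X) = x - (2:ℤ) • y + z by module] at i10
  rw [show ((-(y)) + (-(x + z)) : X) = -(x + y + z) by module] at i10
  rw [show ((-(y)) - (-(x + z)) : X) = x - y + z by module] at i10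
  rw [hodd (y)] at i10
  rw [hodd (x + y + z)] at i10
  rw [hodd (x + (2:ℤ) • y + z)] at i10
  have i11 := hc (-(y)) (-(x - z))
  rw [show (2 • (-(y)) + (-(x - z)) : X) = -(x + (2:ℤ) • y - z) by module] at i11
  rw [show (2 • (-(y)) - (-(x - z)) : X) = x - (2:ℤ) • y - z by module] at i11
  rw [show ((-(y)) + (-(x - z)) : X) = -(x + y - z) by module] at i11
  rw [show ((-(y)) - (-(x - z)) : X) = x - y - z by module] at i11
  rw [hodd (y)] at i11
  rw [hodd (x + y - z)] at i11
  rw [hodd (x + (2:ℤ) • y - z)] at i11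
  have i12 := hc (-(y)) (-(y + z))
  rw [show (2 • (-(y)) + (-(y + z)) : X) = -((3:ℤ) • y + z) by module] at i12
  rw [show (2 • (-(y)) - (-(y + z)) : X) = -(y - z) by module] at i12
  rw [show ((-(y)) + (-(y + z)) : X) = -((2:ℤ) • y + z) by module] at i12
  rw [show ((-(y)) - (-(y + z)) : X) = z by module] at i12
  rw [hodd (y - z)] at i12
  rw [hodd (y)] at i12
  rw [hodd ((2:ℤ) • y + z)] at i12
  rw [hodd ((3:ℤ) • y + z)] at i12
  have i13 := hc (-(z)) (-(x + y))
  rw [show (2 • (-(z)) + (-(x + y)) : X) = -(x + y + (2:ℤ) • z) by module] at i13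
  rw [show (2 • (-(z)) - (-(x + y)) : X) = x + y - (2:ℤ) • z by module] at i13
  rw [show ((-(z)) + (-(x + y)) : X) = -(x + y + z) by module] at i13
  rw [show ((-(z)) - (-(x + y)) : X) = x + y - z by module] at i13
  rw [hodd (z)] at i13
  rw [hodd (x + y + z)] at i13
  rw [hodd (x + y + (2:ℤ) • z)] at i13
  have i14 := hc (-(z)) (-(x - z))
  rw [show (2 • (-(z)) + (-(x - z)) : X) = -(x + z) by module] at i14
  rw [show (2 • (-(z)) - (-(x - z)) : X) = x - (3:ℤ) • z by module] at i14
  rw [show ((-(z)) + (-(x - z)) : X) = -(x) by module] at i14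
  rw [show ((-(z)) - (-(x - z)) : X) = x - (2:ℤ) • z by module] at i14
  rw [hodd (z)] at i14
  rw [hodd (x)] at i14
  rw [hodd (x + z)] at i14
  have i15 := hc (-(z)) (-(x - y))
  rw [show (2 • (-(z)) + (-(x - y)) : X) = -(x - y + (2:ℤ) • z) by module] at i15
  rw [show (2 • (-(z)) - (-(x - y)) : X) = x - y - (2:ℤ) • z by module] at i15
  rw [show ((-(z)) + (-(x - y)) : X) = -(x - y + z) by module] at i15
  rw [show ((-(z)) - (-(x - y)) : X) = x - y - z by module] at i15
  rw [hodd (z)] at i15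
  rw [hodd (x - y + z)] at i15
  rw [hodd (x - y + (2:ℤ) • z)] at i15
  have i16 := hc (-(z)) (-(y + z))
  rw [show (2 • (-(z)) + (-(y + z)) : X) = -(y + (3:ℤ) • z) by module] at i16
  rw [show (2 • (-(z)) - (-(y + z)) : X) = y - z by module] at i16
  rw [show ((-(z)) + (-(y + z)) : X) = -(y + (2:ℤ) • z) by module] at i16
  rw [show ((-(z)) - (-(y + z)) : X) = y by module] at i16
  rw [hodd (z)] at i16
  rw [hodd (y + (2:ℤ) • z)] at i16
  rw [hodd (y + (3:ℤ) • z)] at i16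
  have i17 := hc (-(x + y)) (-(x + z))
  rw [show (2 • (-(x + y)) + (-(x + z)) : X) = -((3:ℤ) • x + (2:ℤ) • y + z) by module] at i17
  rw [show (2 • (-(x + y)) - (-(x + z)) : X) = -(x + (2:ℤ) • y - z) by module] at i17
  rw [show ((-(x + y)) + (-(x + z)) : X) = -((2:ℤ) • x + y + z) by module] at i17
  rw [show ((-(x + y)) - (-(x + z)) : X) = -(y - z) by module] at i17
  rw [hodd (y - z)] at i17
  rw [hodd (x + y)] at i17
  rw [hodd (x + (2:ℤ) • y - z)] at i17
  rw [hodd ((2:ℤ) • x + y + z)] at i17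
  rw [hodd ((3:ℤ) • x + (2:ℤ) • y + z)] at i17
  have i18 := hc (-(x + y)) (-(x - z))
  rw [show (2 • (-(x + y)) + (-(x - z)) : X) = -((3:ℤ) • x + (2:ℤ) • y - z) by module] at i18
  rw [show (2 • (-(x + y)) - (-(x - z)) : X) = -(x + (2:ℤ) • y + z) by module] at i18
  rw [show ((-(x + y)) + (-(x - z)) : X) = -((2:ℤ) • x + y - z) by module] at i18
  rw [show ((-(x + y)) - (-(x - z)) : X) = -(y + z) by module] at i18
  rw [hodd (y + z)] at i18
  rw [hodd (x + y)] at i18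
  rw [hodd (x + (2:ℤ) • y + z)] at i18
  rw [hodd ((2:ℤ) • x + y - z)] at i18
  rw [hodd ((3:ℤ) • x + (2:ℤ) • y - z)] at i18
  have i19 := hc (-(x + y)) (-(x - y))
  rw [show (2 • (-(x + y)) + (-(x - y)) : X) = -((3:ℤ) • x + y) by module] at i19
  rw [show (2 • (-(x + y)) - (-(x - y)) : X) = -(x + (3:ℤ) • y) by module] at i19
  rw [show ((-(x + y)) + (-(x - y)) : X) = -((2:ℤ) • x) by module] at i19
  rw [show ((-(x + y)) - (-(x - y)) : X) = -((2:ℤ) • y) by module] at i19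
  rw [hodd ((2:ℤ) • y)] at i19
  rw [hodd (x + y)] at i19
  rw [hodd (x + (3:ℤ) • y)] at i19
  rw [hodd ((2:ℤ) • x)] at i19
  rw [hodd ((3:ℤ) • x + y)] at i19
  have i20 := hc (-(x + y)) (-(y + z))
  rw [show (2 • (-(x + y)) + (-(y + z)) : X) = -((2:ℤ) • x + (3:ℤ) • y + z) by module] at i20
  rw [show (2 • (-(x + y)) - (-(y + z)) : X) = -((2:ℤ) • x + y - z) by module] at i20
  rw [show ((-(x + y)) + (-(y + z)) : X) = -(x + (2:ℤ) • y + z) by module] at i20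
  rw [show ((-(x + y)) - (-(y + z)) : X) = -(x - z) by module] at i20
  rw [hodd (x - z)] at i20
  rw [hodd (x + y)] at i20
  rw [hodd (x + (2:ℤ) • y + z)] at i20
  rw [hodd ((2:ℤ) • x + y - z)] at i20
  rw [hodd ((2:ℤ) • x + (3:ℤ) • y + z)] at i20
  have i21 := hc (-(x + z)) (-(x + y))
  rw [show (2 • (-(x + z)) + (-(x + y)) : X) = -((3:ℤ) • x + y + (2:ℤ) • z) by module] at i21
  rw [show (2 • (-(x + z)) - (-(x + y)) : X) = -(x - y + (2:ℤ) • z) by module] at i21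
  rw [show ((-(x + z)) + (-(x + y)) : X) = -((2:ℤ) • x + y + z) by module] at i21
  rw [show ((-(x + z)) - (-(x + y)) : X) = y - z by module] at i21
  rw [hodd (x - y + (2:ℤ) • z)] at i21
  rw [hodd (x + z)] at i21
  rw [hodd ((2:ℤ) • x + y + z)] at i21
  rw [hodd ((3:ℤ) • x + y + (2:ℤ) • z)] at i21
  have i22 := hc (-(x + z)) (-(y + z))
  rw [show (2 • (-(x + z)) + (-(y + z)) : X) = -((2:ℤ) • x + y + (3:ℤ) • z) by module] at i22
  rw [show (2 • (-(x + z)) - (-(y + z)) : X) = -((2:ℤ) • x - y + z) by module] at i22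
  rw [show ((-(x + z)) + (-(y + z)) : X) = -(x + y + (2:ℤ) • z) by module] at i22
  rw [show ((-(x + z)) - (-(y + z)) : X) = -(x - y) by module] at i22
  rw [hodd (x - y)] at i22
  rw [hodd (x + z)] at i22
  rw [hodd (x + y + (2:ℤ) • z)] at i22
  rw [hodd ((2:ℤ) • x - y + z)] at i22
  rw [hodd ((2:ℤ) • x + y + (3:ℤ) • z)] at i22
  have i23 := hc (-(x)) (-(x + y + z))
  rw [show (2 • (-(x)) + (-(x + y + z)) : X) = -((3:ℤ) • x + y + z) by module] at i23
  rw [show (2 • (-(x)) - (-(x + y + z)) : X) = -(x - y - z) by module] at i23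
  rw [show ((-(x)) + (-(x + y + z)) : X) = -((2:ℤ) • x + y + z) by module] at i23
  rw [show ((-(x)) - (-(x + y + z)) : X) = y + z by module] at i23
  rw [hodd (x - y - z)] at i23
  rw [hodd (x)] at i23
  rw [hodd ((2:ℤ) • x + y + z)] at i23
  rw [hodd ((3:ℤ) • x + y + z)] at i23
  have i24 := hc (-(x)) (-(x + y - z))
  rw [show (2 • (-(x)) + (-(x + y - z)) : X) = -((3:ℤ) • x + y - z) by module] at i24
  rw [show (2 • (-(x)) - (-(x + y - z)) : X) = -(x - y + z) by module] at i24
  rw [show ((-(x)) + (-(x + y - z)) : X) = -((2:ℤ) • x + y - z) by module] at i24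
  rw [show ((-(x)) - (-(x + y - z)) : X) = y - z by module] at i24
  rw [hodd (x - y + z)] at i24
  rw [hodd (x)] at i24
  rw [hodd ((2:ℤ) • x + y - z)] at i24
  rw [hodd ((3:ℤ) • x + y - z)] at i24
  have i25 := hc (-(x)) (-(x - y + z))
  rw [show (2 • (-(x)) + (-(x - y + z)) : X) = -((3:ℤ) • x - y + z) by module] at i25
  rw [show (2 • (-(x)) - (-(x - y + z)) : X) = -(x + y - z) by module] at i25
  rw [show ((-(x)) + (-(x - y + z)) : X) = -((2:ℤ) • x - y + z) by module] at i25
  rw [show ((-(x)) - (-(x - y + z)) : X) = -(y - z) by module] at i25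
  rw [hodd (y - z)] at i25
  rw [hodd (x)] at i25
  rw [hodd (x + y - z)] at i25
  rw [hodd ((2:ℤ) • x - y + z)] at i25
  rw [hodd ((3:ℤ) • x - y + z)] at i25
  have i26 := hc (-(x - z)) (-(x + z))
  rw [show (2 • (-(x - z)) + (-(x + z)) : X) = -((3:ℤ) • x - z) by module] at i26
  rw [show (2 • (-(x - z)) - (-(x + z)) : X) = -(x - (3:ℤ) • z) by module] at i26
  rw [show ((-(x - z)) + (-(x + z)) : X) = -((2:ℤ) • x) by module] at i26
  rw [show ((-(x - z)) - (-(x + z)) : X) = (2:ℤ) • z by module] at i26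
  rw [hodd (x - (3:ℤ) • z)] at i26
  rw [hodd (x - z)] at i26
  rw [hodd ((2:ℤ) • x)] at i26
  rw [hodd ((3:ℤ) • x - z)] at i26
  have i27 := hc (-(y + z)) (-(x + y))
  rw [show (2 • (-(y + z)) + (-(x + y)) : X) = -(x + (3:ℤ) • y + (2:ℤ) • z) by module] at i27
  rw [show (2 • (-(y + z)) - (-(x + y)) : X) = x - y - (2:ℤ) • z by module] at i27
  rw [show ((-(y + z)) + (-(x + y)) : X) = -(x + (2:ℤ) • y + z) by module] at i27
  rw [show ((-(y + z)) - (-(x + y)) : X) = x - z by module] at i27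
  rw [hodd (y + z)] at i27
  rw [hodd (x + (2:ℤ) • y + z)] at i27
  rw [hodd (x + (3:ℤ) • y + (2:ℤ) • z)] at i27
  have i28 := hc (-(y + z)) (-(x + z))
  rw [show (2 • (-(y + z)) + (-(x + z)) : X) = -(x + (2:ℤ) • y + (3:ℤ) • z) by module] at i28
  rw [show (2 • (-(y + z)) - (-(x + z)) : X) = x - (2:ℤ) • y - z by module] at i28
  rw [show ((-(y + z)) + (-(x + z)) : X) = -(x + y + (2:ℤ) • z) by module] at i28
  rw [show ((-(y + z)) - (-(x + z)) : X) = x - y by module] at i28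
  rw [hodd (y + z)] at i28
  rw [hodd (x + y + (2:ℤ) • z)] at i28
  rw [hodd (x + (2:ℤ) • y + (3:ℤ) • z)] at i28
  have i29 := hc (-(y + z)) (-(y - z))
  rw [show (2 • (-(y + z)) + (-(y - z)) : X) = -((3:ℤ) • y + z) by module] at i29
  rw [show (2 • (-(y + z)) - (-(y - z)) : X) = -(y + (3:ℤ) • z) by module] at i29
  rw [show ((-(y + z)) + (-(y - z)) : X) = -((2:ℤ) • y) by module] at i29
  rw [show ((-(y + z)) - (-(y - z)) : X) = -((2:ℤ) • z) by module] at i29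
  rw [hodd ((2:ℤ) • z)] at i29
  rw [hodd (y + z)] at i29
  rw [hodd (y + (3:ℤ) • z)] at i29
  rw [hodd ((2:ℤ) • y)] at i29
  rw [hodd ((3:ℤ) • y + z)] at i29
  have i30 := hc (-(y - z)) (-(x - z))
  rw [show (2 • (-(y - z)) + (-(x - z)) : X) = -(x + (2:ℤ) • y - (3:ℤ) • z) by module] at i30
  rw [show (2 • (-(y - z)) - (-(x - z)) : X) = x - (2:ℤ) • y + z by module] at i30
  rw [show ((-(y - z)) + (-(x - z)) : X) = -(x + y - (2:ℤ) • z) by module] at i30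
  rw [show ((-(y - z)) - (-(x - z)) : X) = x - y by module] at i30
  rw [hodd (y - z)] at i30
  rw [hodd (x + y - (2:ℤ) • z)] at i30
  rw [hodd (x + (2:ℤ) • y - (3:ℤ) • z)] at i30
  have i31 := hc (-(z)) (-(x + y + z))
  rw [show (2 • (-(z)) + (-(x + y + z)) : X) = -(x + y + (3:ℤ) • z) by module] at i31
  rw [show (2 • (-(z)) - (-(x + y + z)) : X) = x + y - z by module] at i31
  rw [show ((-(z)) + (-(x + y + z)) : X) = -(x + y + (2:ℤ) • z) by module] at i31
  rw [show ((-(z)) - (-(x + y + z)) : X) = x + y by module] at i31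
  rw [hodd (z)] at i31
  rw [hodd (x + y + (2:ℤ) • z)] at i31
  rw [hodd (x + y + (3:ℤ) • z)] at i31
  have i32 := hc (-(z)) (-(x - y + z))
  rw [show (2 • (-(z)) + (-(x - y + z)) : X) = -(x - y + (3:ℤ) • z) by module] at i32
  rw [show (2 • (-(z)) - (-(x - y + z)) : X) = x - y - z by module] at i32
  rw [show ((-(z)) + (-(x - y + z)) : X) = -(x - y + (2:ℤ) • z) by module] at i32
  rw [show ((-(z)) - (-(x - y + z)) : X) = x - y by module] at i32
  rw [hodd (z)] at i32
  rw [hodd (x - y + (2:ℤ) • z)] at i32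
  rw [hodd (x - y + (3:ℤ) • z)] at i32
  have i33 := hc (-(z)) (-(x - y - z))
  rw [show (2 • (-(z)) + (-(x - y - z)) : X) = -(x - y + z) by module] at i33
  rw [show (2 • (-(z)) - (-(x - y - z)) : X) = x - y - (3:ℤ) • z by module] at i33
  rw [show ((-(z)) + (-(x - y - z)) : X) = -(x - y) by module] at i33
  rw [show ((-(z)) - (-(x - y - z)) : X) = x - y - (2:ℤ) • z by module] at i33
  rw [hodd (z)] at i33
  rw [hodd (x - y)] at i33
  rw [hodd (x - y + z)] at i33
  have i34 := hc (-(x + y + z)) (-(x - z))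
  rw [show (2 • (-(x + y + z)) + (-(x - z)) : X) = -((3:ℤ) • x + (2:ℤ) • y + z) by module] at i34
  rw [show (2 • (-(x + y + z)) - (-(x - z)) : X) = -(x + (2:ℤ) • y + (3:ℤ) • z) by module] at i34
  rw [show ((-(x + y + z)) + (-(x - z)) : X) = -((2:ℤ) • x + y) by module] at i34
  rw [show ((-(x + y + z)) - (-(x - z)) : X) = -(y + (2:ℤ) • z) by module] at i34
  rw [hodd (y + (2:ℤ) • z)] at i34
  rw [hodd (x + y + z)] at i34
  rw [hodd (x + (2:ℤ) • y + (3:ℤ) • z)] at i34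
  rw [hodd ((2:ℤ) • x + y)] at i34
  rw [hodd ((3:ℤ) • x + (2:ℤ) • y + z)] at i34
  have i35 := hc (-(x + y + z)) (-(x - y))
  rw [show (2 • (-(x + y + z)) + (-(x - y)) : X) = -((3:ℤ) • x + y + (2:ℤ) • z) by module] at i35
  rw [show (2 • (-(x + y + z)) - (-(x - y)) : X) = -(x + (3:ℤ) • y + (2:ℤ) • z) by module] at i35
  rw [show ((-(x + y + z)) + (-(x - y)) : X) = -((2:ℤ) • x + z) by module] at i35
  rw [show ((-(x + y + z)) - (-(x - y)) : X) = -((2:ℤ) • y + z) by module] at i35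
  rw [hodd ((2:ℤ) • y + z)] at i35
  rw [hodd (x + y + z)] at i35
  rw [hodd (x + (3:ℤ) • y + (2:ℤ) • z)] at i35
  rw [hodd ((2:ℤ) • x + z)] at i35
  rw [hodd ((3:ℤ) • x + y + (2:ℤ) • z)] at i35
  have i36 := hc (-(x + y + z)) (-(y - z))
  rw [show (2 • (-(x + y + z)) + (-(y - z)) : X) = -((2:ℤ) • x + (3:ℤ) • y + z) by module] at i36
  rw [show (2 • (-(x + y + z)) - (-(y - z)) : X) = -((2:ℤ) • x + y + (3:ℤ) • z) by module] at i36
  rw [show ((-(x + y + z)) + (-(y - z)) : X) = -(x + (2:ℤ) • y) by module] at i36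
  rw [show ((-(x + y + z)) - (-(y - z)) : X) = -(x + (2:ℤ) • z) by module] at i36
  rw [hodd (x + (2:ℤ) • z)] at i36
  rw [hodd (x + y + z)] at i36
  rw [hodd (x + (2:ℤ) • y)] at i36
  rw [hodd ((2:ℤ) • x + y + (3:ℤ) • z)] at i36
  rw [hodd ((2:ℤ) • x + (3:ℤ) • y + z)] at i36
  have i37 := hc (-(x + y - z)) (-(x + z))
  rw [show (2 • (-(x + y - z)) + (-(x + z)) : X) = -((3:ℤ) • x + (2:ℤ) • y - z) by module] at i37
  rw [show (2 • (-(x + y - z)) - (-(x + z)) : X) = -(x + (2:ℤ) • y - (3:ℤ) • z) by module] at i37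
  rw [show ((-(x + y - z)) + (-(x + z)) : X) = -((2:ℤ) • x + y) by module] at i37
  rw [show ((-(x + y - z)) - (-(x + z)) : X) = -(y - (2:ℤ) • z) by module] at i37
  rw [hodd (y - (2:ℤ) • z)] at i37
  rw [hodd (x + y - z)] at i37
  rw [hodd (x + (2:ℤ) • y - (3:ℤ) • z)] at i37
  rw [hodd ((2:ℤ) • x + y)] at i37
  rw [hodd ((3:ℤ) • x + (2:ℤ) • y - z)] at i37
  have i38 := hc (-(x + z)) (-(x + y - z))
  rw [show (2 • (-(x + z)) + (-(x + y - z)) : X) = -((3:ℤ) • x + y + z) by module] at i38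
  rw [show (2 • (-(x + z)) - (-(x + y - z)) : X) = -(x - y + (3:ℤ) • z) by module] at i38
  rw [show ((-(x + z)) + (-(x + y - z)) : X) = -((2:ℤ) • x + y) by module] at i38
  rw [show ((-(x + z)) - (-(x + y - z)) : X) = y - (2:ℤ) • z by module] at i38
  rw [hodd (x - y + (3:ℤ) • z)] at i38
  rw [hodd (x + z)] at i38
  rw [hodd ((2:ℤ) • x + y)] at i38
  rw [hodd ((3:ℤ) • x + y + z)] at i38
  have i39 := hc (-(x + z)) (-(x - y - z))
  rw [show (2 • (-(x + z)) + (-(x - y - z)) : X) = -((3:ℤ) • x - y + z) by module] at i39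
  rw [show (2 • (-(x + z)) - (-(x - y - z)) : X) = -(x + y + (3:ℤ) • z) by module] at i39
  rw [show ((-(x + z)) + (-(x - y - z)) : X) = -((2:ℤ) • x - y) by module] at i39
  rw [show ((-(x + z)) - (-(x - y - z)) : X) = -(y + (2:ℤ) • z) by module] at i39
  rw [hodd (y + (2:ℤ) • z)] at i39
  rw [hodd (x + z)] at i39
  rw [hodd (x + y + (3:ℤ) • z)] at i39
  rw [hodd ((2:ℤ) • x - y)] at i39
  rw [hodd ((3:ℤ) • x - y + z)] at i39
  have i40 := hc (-(x - z)) (-(x + y + z))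
  rw [show (2 • (-(x - z)) + (-(x + y + z)) : X) = -((3:ℤ) • x + y - z) by module] at i40
  rw [show (2 • (-(x - z)) - (-(x + y + z)) : X) = -(x - y - (3:ℤ) • z) by module] at i40
  rw [show ((-(x - z)) + (-(x + y + z)) : X) = -((2:ℤ) • x + y) by module] at i40
  rw [show ((-(x - z)) - (-(x + y + z)) : X) = y + (2:ℤ) • z by module] at i40
  rw [hodd (x - y - (3:ℤ) • z)] at i40
  rw [hodd (x - z)] at i40
  rw [hodd ((2:ℤ) • x + y)] at i40
  rw [hodd ((3:ℤ) • x + y - z)] at i40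
  linear_combination (norm := module) ((2 : ℝ)/3) • i0 + ((-2 : ℝ)/3) • i1 + ((-2 : ℝ)/3) • i2 + ((-2 : ℝ)/3) • i3 + ((2 : ℝ)/3) • i4 + ((2 : ℝ)/3) • i5 + ((-1 : ℝ)/3) • i6 + ((-1 : ℝ)/3) • i7 + (1 : ℝ) • i8 + ((-1 : ℝ)/3) • i9 + ((-1 : ℝ)/6) • i10 + ((1 : ℝ)/6) • i11 + ((1 : ℝ)/3) • i12 + ((-1 : ℝ)/3) • i13 + ((1 : ℝ)/3) • i14 + ((-2 : ℝ)/3) • i15 + ((1 : ℝ)/3) • i16 + ((-1 : ℝ)/6) • i17 + ((1 : ℝ)/6) • i18 + ((1 : ℝ)/3) • i19 + ((-1 : ℝ)/3) • i20 + ((1 : ℝ)/3) • i21 + ((-1 : ℝ)/3) • i22 + ((-1 : ℝ)/6) • i23 + ((1 : ℝ)/6) • i24 + ((1 : ℝ)/3) • i25 + ((1 : ℝ)/3) • i26 + ((1 : ℝ)/3) • i27 + ((-1 : ℝ)/6) • i28 + ((-1 : ℝ)/3) • i29 + ((1 : ℝ)/6) • i30 + ((1 : ℝ)/3) • i31 +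 ((-1 : ℝ)/6) • i32 + ((-1 : ℝ)/6) • i33 + ((1 : ℝ)/6) • i34 + ((-1 : ℝ)/3) • i35 + ((1 : ℝ)/3) • i36 + ((-1 : ℝ)/6) • i37 + ((1 : ℝ)/6) • i38 + ((-1 : ℝ)/3) • i39 + ((-1 : ℝ)/6) • i40

theorem quarticF_quad {f : X → Y} (hq : IsQuartic f) (hev : ∀ v : X, f (-v) = f v)
    (hz : f 0 = 0) :
    ∀ x y z : X, f (x + y + z) + f (x + y - z) + f (x - y + z) + f (x - y - z)
      = (2:ℝ) • f (x + y) + (2:ℝ) • f (x - y) + (2:ℝ) • f (x + z) + (2:ℝ) • f (x - z)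
        + (2:ℝ) • f (y + z) + (2:ℝ) • f (y - z)
        - (4:ℝ) • f x - (4:ℝ) • f y - (4:ℝ) • f z := by
  intro x y z
  have i0 := hq (-(x)) (0 : X)
  rw [show (2 • (-(x)) + (0 : X) : X) = -((2:ℤ) • x) by module] at i0
  rw [show (2 • (-(x)) - (0 : X) : X) = -((2:ℤ) • x) by module] at i0
  rw [show ((-(x)) + (0 : X) : X) = -(x) by module] at i0
  rw [show ((-(x)) - (0 : X) : X) = -(x) by module] at i0
  rw [hev (x)] at i0
  rw [hev ((2:ℤ) • x)] at i0
  rw [hz] at i0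
  have i1 := hq (-(x)) (-(z))
  rw [show (2 • (-(x)) + (-(z)) : X) = -((2:ℤ) • x + z) by module] at i1
  rw [show (2 • (-(x)) - (-(z)) : X) = -((2:ℤ) • x - z) by module] at i1
  rw [show ((-(x)) + (-(z)) : X) = -(x + z) by module] at i1
  rw [show ((-(x)) - (-(z)) : X) = -(x - z) by module] at i1
  rw [hev (z)] at i1
  rw [hev (x - z)] at i1
  rw [hev (x)] at i1
  rw [hev (x + z)] at i1
  rw [hev ((2:ℤ) • x - z)] at i1
  rw [hev ((2:ℤ) • x + z)] at i1
  have i2 := hq (-(z)) (-(y))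
  rw [show (2 • (-(z)) + (-(y)) : X) = -(y + (2:ℤ) • z) by module] at i2
  rw [show (2 • (-(z)) - (-(y)) : X) = y - (2:ℤ) • z by module] at i2
  rw [show ((-(z)) + (-(y)) : X) = -(y + z) by module] at i2
  rw [show ((-(z)) - (-(y)) : X) = y - z by module] at i2
  rw [hev (z)] at i2
  rw [hev (y)] at i2
  rw [hev (y + z)] at i2
  rw [hev (y + (2:ℤ) • z)] at i2
  have i3 := hq (-(x)) (-(x + y))
  rw [show (2 • (-(x)) + (-(x + y)) : X) = -((3:ℤ) • x + y) by module] at i3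
  rw [show (2 • (-(x)) - (-(x + y)) : X) = -(x - y) by module] at i3
  rw [show ((-(x)) + (-(x + y)) : X) = -((2:ℤ) • x + y) by module] at i3
  rw [show ((-(x)) - (-(x + y)) : X) = y by module] at i3
  rw [hev (x - y)] at i3
  rw [hev (x)] at i3
  rw [hev (x + y)] at i3
  rw [hev ((2:ℤ) • x + y)] at i3
  rw [hev ((3:ℤ) • x + y)] at i3
  have i4 := hq (-(x)) (-(x + z))
  rw [show (2 • (-(x)) + (-(x + z)) : X) = -((3:ℤ) • x + z) by module] at i4
  rw [show (2 • (-(x)) - (-(x + z)) : X) = -(x - z) by module] at i4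
  rw [show ((-(x)) + (-(x + z)) : X) = -((2:ℤ) • x + z) by module] at i4
  rw [show ((-(x)) - (-(x + z)) : X) = z by module] at i4
  rw [hev (x - z)] at i4
  rw [hev (x)] at i4
  rw [hev (x + z)] at i4
  rw [hev ((2:ℤ) • x + z)] at i4
  rw [hev ((3:ℤ) • x + z)] at i4
  have i5 := hq (-(x)) (-(y - z))
  rw [show (2 • (-(x)) + (-(y - z)) : X) = -((2:ℤ) • x + y - z) by module] at i5
  rw [show (2 • (-(x)) - (-(y - z)) : X) = -((2:ℤ) • x - y + z) by module] at i5
  rw [show ((-(x)) + (-(y - z)) : X) = -(x + y - z) by module] at i5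
  rw [show ((-(x)) - (-(y - z)) : X) = -(x - y + z) by module] at i5
  rw [hev (y - z)] at i5
  rw [hev (x - y + z)] at i5
  rw [hev (x)] at i5
  rw [hev (x + y - z)] at i5
  rw [hev ((2:ℤ) • x - y + z)] at i5
  rw [hev ((2:ℤ) • x + y - z)] at i5
  have i6 := hq (-(y)) (-(x + y))
  rw [show (2 • (-(y)) + (-(x + y)) : X) = -(x + (3:ℤ) • y) by module] at i6
  rw [show (2 • (-(y)) - (-(x + y)) : X) = x - y by module] at i6
  rw [show ((-(y)) + (-(x + y)) : X) = -(x + (2:ℤ) • y) by module] at i6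
  rw [show ((-(y)) - (-(x + y)) : X) = x by module] at i6
  rw [hev (y)] at i6
  rw [hev (x + y)] at i6
  rw [hev (x + (2:ℤ) • y)] at i6
  rw [hev (x + (3:ℤ) • y)] at i6
  have i7 := hq (-(y)) (-(x + z))
  rw [show (2 • (-(y)) + (-(x + z)) : X) = -(x + (2:ℤ) • y + z) by module] at i7
  rw [show (2 • (-(y)) - (-(x + z)) : X) = x - (2:ℤ) • y + z by module] at i7
  rw [show ((-(y)) + (-(x + z)) : X) = -(x + y + z) by module] at i7
  rw [show ((-(y)) - (-(x + z)) : X) = x - y + z by module] at i7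
  rw [hev (y)] at i7
  rw [hev (x + z)] at i7
  rw [hev (x + y + z)] at i7
  rw [hev (x + (2:ℤ) • y + z)] at i7
  have i8 := hq (-(y)) (-(y + z))
  rw [show (2 • (-(y)) + (-(y + z)) : X) = -((3:ℤ) • y + z) by module] at i8
  rw [show (2 • (-(y)) - (-(y + z)) : X) = -(y - z) by module] at i8
  rw [show ((-(y)) + (-(y + z)) : X) = -((2:ℤ) • y + z) by module] at i8
  rw [show ((-(y)) - (-(y + z)) : X) = z by module] at i8
  rw [hev (y - z)] at i8
  rw [hev (y)] at i8
  rw [hev (y + z)] at i8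
  rw [hev ((2:ℤ) • y + z)] at i8
  rw [hev ((3:ℤ) • y + z)] at i8
  have i9 := hq (-(z)) (-(x + y))
  rw [show (2 • (-(z)) + (-(x + y)) : X) = -(x + y + (2:ℤ) • z) by module] at i9
  rw [show (2 • (-(z)) - (-(x + y)) : X) = x + y - (2:ℤ) • z by module] at i9
  rw [show ((-(z)) + (-(x + y)) : X) = -(x + y + z) by module] at i9
  rw [show ((-(z)) - (-(x + y)) : X) = x + y - z by module] at i9
  rw [hev (z)] at i9
  rw [hev (x + y)] at i9
  rw [hev (x + y + z)] at i9
  rw [hev (x + y + (2:ℤ) • z)] at i9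
  have i10 := hq (-(z)) (-(x + z))
  rw [show (2 • (-(z)) + (-(x + z)) : X) = -(x + (3:ℤ) • z) by module] at i10
  rw [show (2 • (-(z)) - (-(x + z)) : X) = x - z by module] at i10
  rw [show ((-(z)) + (-(x + z)) : X) = -(x + (2:ℤ) • z) by module] at i10
  rw [show ((-(z)) - (-(x + z)) : X) = x by module] at i10
  rw [hev (z)] at i10
  rw [hev (x + z)] at i10
  rw [hev (x + (2:ℤ) • z)] at i10
  rw [hev (x + (3:ℤ) • z)] at i10
  have i11 := hq (-(z)) (-(y + z))
  rw [show (2 • (-(z)) + (-(y + z)) : X) = -(y + (3:ℤ) • z) by module] at i11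
  rw [show (2 • (-(z)) - (-(y + z)) : X) = y - z by module] at i11
  rw [show ((-(z)) + (-(y + z)) : X) = -(y + (2:ℤ) • z) by module] at i11
  rw [show ((-(z)) - (-(y + z)) : X) = y by module] at i11
  rw [hev (z)] at i11
  rw [hev (y + z)] at i11
  rw [hev (y + (2:ℤ) • z)] at i11
  rw [hev (y + (3:ℤ) • z)] at i11
  have i12 := hq (-(x + y)) (-(x - z))
  rw [show (2 • (-(x + y)) + (-(x - z)) : X) = -((3:ℤ) • x + (2:ℤ) • y - z) by module] at i12
  rw [show (2 • (-(x + y)) - (-(x - z)) : X) = -(x + (2:ℤ) • y + z) by module] at i12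
  rw [show ((-(x + y)) + (-(x - z)) : X) = -((2:ℤ) • x + y - z) by module] at i12
  rw [show ((-(x + y)) - (-(x - z)) : X) = -(y + z) by module] at i12
  rw [hev (y + z)] at i12
  rw [hev (x - z)] at i12
  rw [hev (x + y)] at i12
  rw [hev (x + (2:ℤ) • y + z)] at i12
  rw [hev ((2:ℤ) • x + y - z)] at i12
  rw [hev ((3:ℤ) • x + (2:ℤ) • y - z)] at i12
  have i13 := hq (-(x + y)) (-(x - y))
  rw [show (2 • (-(x + y)) + (-(x - y)) : X) = -((3:ℤ) • x + y) by module] at i13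
  rw [show (2 • (-(x + y)) - (-(x - y)) : X) = -(x + (3:ℤ) • y) by module] at i13
  rw [show ((-(x + y)) + (-(x - y)) : X) = -((2:ℤ) • x) by module] at i13
  rw [show ((-(x + y)) - (-(x - y)) : X) = -((2:ℤ) • y) by module] at i13
  rw [hev ((2:ℤ) • y)] at i13
  rw [hev (x - y)] at i13
  rw [hev (x + y)] at i13
  rw [hev (x + (3:ℤ) • y)] at i13
  rw [hev ((2:ℤ) • x)] at i13
  rw [hev ((3:ℤ) • x + y)] at i13
  have i14 := hq (-(x + y)) (-(y + z))
  rw [show (2 • (-(x + y)) + (-(y + z)) : X) = -((2:ℤ) • x + (3:ℤ) • y + z) by module] at i14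
  rw [show (2 • (-(x + y)) - (-(y + z)) : X) = -((2:ℤ) • x + y - z) by module] at i14
  rw [show ((-(x + y)) + (-(y + z)) : X) = -(x + (2:ℤ) • y + z) by module] at i14
  rw [show ((-(x + y)) - (-(y + z)) : X) = -(x - z) by module] at i14
  rw [hev (y + z)] at i14
  rw [hev (x - z)] at i14
  rw [hev (x + y)] at i14
  rw [hev (x + (2:ℤ) • y + z)] at i14
  rw [hev ((2:ℤ) • x + y - z)] at i14
  rw [hev ((2:ℤ) • x + (3:ℤ) • y + z)] at i14
  have i15 := hq (-(x + z)) (-(x - z))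
  rw [show (2 • (-(x + z)) + (-(x - z)) : X) = -((3:ℤ) • x + z) by module] at i15
  rw [show (2 • (-(x + z)) - (-(x - z)) : X) = -(x + (3:ℤ) • z) by module] at i15
  rw [show ((-(x + z)) + (-(x - z)) : X) = -((2:ℤ) • x) by module] at i15
  rw [show ((-(x + z)) - (-(x - z)) : X) = -((2:ℤ) • z) by module] at i15
  rw [hev ((2:ℤ) • z)] at i15
  rw [hev (x - z)] at i15
  rw [hev (x + z)] at i15
  rw [hev (x + (3:ℤ) • z)] at i15
  rw [hev ((2:ℤ) • x)] at i15
  rw [hev ((3:ℤ) • x + z)] at i15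
  have i16 := hq (-(x + z)) (-(y + z))
  rw [show (2 • (-(x + z)) + (-(y + z)) : X) = -((2:ℤ) • x + y + (3:ℤ) • z) by module] at i16
  rw [show (2 • (-(x + z)) - (-(y + z)) : X) = -((2:ℤ) • x - y + z) by module] at i16
  rw [show ((-(x + z)) + (-(y + z)) : X) = -(x + y + (2:ℤ) • z) by module] at i16
  rw [show ((-(x + z)) - (-(y + z)) : X) = -(x - y) by module] at i16
  rw [hev (y + z)] at i16
  rw [hev (x - y)] at i16
  rw [hev (x + z)] at i16
  rw [hev (x + y + (2:ℤ) • z)] at i16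
  rw [hev ((2:ℤ) • x - y + z)] at i16
  rw [hev ((2:ℤ) • x + y + (3:ℤ) • z)] at i16
  have i17 := hq (-(x)) (-(x + y - z))
  rw [show (2 • (-(x)) + (-(x + y - z)) : X) = -((3:ℤ) • x + y - z) by module] at i17
  rw [show (2 • (-(x)) - (-(x + y - z)) : X) = -(x - y + z) by module] at i17
  rw [show ((-(x)) + (-(x + y - z)) : X) = -((2:ℤ) • x + y - z) by module] at i17
  rw [show ((-(x)) - (-(x + y - z)) : X) = y - z by module] at i17
  rw [hev (x - y + z)] at i17
  rw [hev (x)] at i17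
  rw [hev (x + y - z)] at i17
  rw [hev ((2:ℤ) • x + y - z)] at i17
  rw [hev ((3:ℤ) • x + y - z)] at i17
  have i18 := hq (-(y + z)) (-(y - z))
  rw [show (2 • (-(y + z)) + (-(y - z)) : X) = -((3:ℤ) • y + z) by module] at i18
  rw [show (2 • (-(y + z)) - (-(y - z)) : X) = -(y + (3:ℤ) • z) by module] at i18
  rw [show ((-(y + z)) + (-(y - z)) : X) = -((2:ℤ) • y) by module] at i18
  rw [show ((-(y + z)) - (-(y - z)) : X) = -((2:ℤ) • z) by module] at i18
  rw [hev ((2:ℤ) • z)] at i18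
  rw [hev (y - z)] at i18
  rw [hev (y + z)] at i18
  rw [hev (y + (3:ℤ) • z)] at i18
  rw [hev ((2:ℤ) • y)] at i18
  rw [hev ((3:ℤ) • y + z)] at i18
  have i19 := hq (-(y)) (-(x + y + z))
  rw [show (2 • (-(y)) + (-(x + y + z)) : X) = -(x + (3:ℤ) • y + z) by module] at i19
  rw [show (2 • (-(y)) - (-(x + y + z)) : X) = x - y + z by module] at i19
  rw [show ((-(y)) + (-(x + y + z)) : X) = -(x + (2:ℤ) • y + z) by module] at i19
  rw [show ((-(y)) - (-(x + y + z)) : X) = x + z by module] at i19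
  rw [hev (y)] at i19
  rw [hev (x + y + z)] at i19
  rw [hev (x + (2:ℤ) • y + z)] at i19
  rw [hev (x + (3:ℤ) • y + z)] at i19
  have i20 := hq (-(y - z)) (-(x - z))
  rw [show (2 • (-(y - z)) + (-(x - z)) : X) = -(x + (2:ℤ) • y - (3:ℤ) • z) by module] at i20
  rw [show (2 • (-(y - z)) - (-(x - z)) : X) = x - (2:ℤ) • y + z by module] at i20
  rw [show ((-(y - z)) + (-(x - z)) : X) = -(x + y - (2:ℤ) • z) by module] at i20
  rw [show ((-(y - z)) - (-(x - z)) : X) = x - y by module] at i20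
  rw [hev (y - z)] at i20
  rw [hev (x - z)] at i20
  rw [hev (x + y - (2:ℤ) • z)] at i20
  rw [hev (x + (2:ℤ) • y - (3:ℤ) • z)] at i20
  have i21 := hq (-(x + y + z)) (-(y - z))
  rw [show (2 • (-(x + y + z)) + (-(y - z)) : X) = -((2:ℤ) • x + (3:ℤ) • y + z) by module] at i21
  rw [show (2 • (-(x + y + z)) - (-(y - z)) : X) = -((2:ℤ) • x + y + (3:ℤ) • z) by module] at i21
  rw [show ((-(x + y + z)) + (-(y - z)) : X) = -(x + (2:ℤ) • y) by module] at i21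
  rw [show ((-(x + y + z)) - (-(y - z)) : X) = -(x + (2:ℤ) • z) by module] at i21
  rw [hev (y - z)] at i21
  rw [hev (x + (2:ℤ) • z)] at i21
  rw [hev (x + y + z)] at i21
  rw [hev (x + (2:ℤ) • y)] at i21
  rw [hev ((2:ℤ) • x + y + (3:ℤ) • z)] at i21
  rw [hev ((2:ℤ) • x + (3:ℤ) • y + z)] at i21
  have i22 := hq (-(x + y)) (-(x - y - z))
  rw [show (2 • (-(x + y)) + (-(x - y - z)) : X) = -((3:ℤ) • x + y - z) by module] at i22
  rw [show (2 • (-(x + y)) - (-(x - y - z)) : X) = -(x + (3:ℤ) • y + z) by module] at i22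
  rw [show ((-(x + y)) + (-(x - y - z)) : X) = -((2:ℤ) • x - z) by module] at i22
  rw [show ((-(x + y)) - (-(x - y - z)) : X) = -((2:ℤ) • y + z) by module] at i22
  rw [hev ((2:ℤ) • y + z)] at i22
  rw [hev (x - y - z)] at i22
  rw [hev (x + y)] at i22
  rw [hev (x + (3:ℤ) • y + z)] at i22
  rw [hev ((2:ℤ) • x - z)] at i22
  rw [hev ((3:ℤ) • x + y - z)] at i22
  have i23 := hq (-(x + y - z)) (-(x + z))
  rw [show (2 • (-(x + y - z)) + (-(x + z)) : X) = -((3:ℤ) • x + (2:ℤ) • y - z) by module] at i23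
  rw [show (2 • (-(x + y - z)) - (-(x + z)) : X) = -(x + (2:ℤ) • y - (3:ℤ) • z) by module] at i23
  rw [show ((-(x + y - z)) + (-(x + z)) : X) = -((2:ℤ) • x + y) by module] at i23
  rw [show ((-(x + y - z)) - (-(x + z)) : X) = -(y - (2:ℤ) • z) by module] at i23
  rw [hev (y - (2:ℤ) • z)] at i23
  rw [hev (x + z)] at i23
  rw [hev (x + y - z)] at i23
  rw [hev (x + (2:ℤ) • y - (3:ℤ) • z)] at i23
  rw [hev ((2:ℤ) • x + y)] at i23
  rw [hev ((3:ℤ) • x + (2:ℤ) • y - z)] at i23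
  linear_combination (norm := module) ((-2 : ℝ)/3) • i0 + ((2 : ℝ)/3) • i1 + ((-2 : ℝ)/3) • i2 + ((1 : ℝ)/6) • i3 + ((1 : ℝ)/6) • i4 + ((-1 : ℝ)/6) • i5 + ((1 : ℝ)/6) • i6 + ((-1 : ℝ)/6) • i7 + ((-1 : ℝ)/6) • i8 + ((2 : ℝ)/3) • i9 + ((1 : ℝ)/6) • i10 + ((-1 : ℝ)/6) • i11 + ((1 : ℝ)/6) • i12 + ((-1 : ℝ)/6) • i13 + ((1 : ℝ)/6) • i14 + ((-1 : ℝ)/6) • i15 + ((1 : ℝ)/6) • i16 + ((-1 : ℝ)/6) • i17 + ((1 : ℝ)/6) • i18 + ((-1 : ℝ)/6) • i19 + ((1 : ℝ)/6) • i20 + ((-1 : ℝ)/6) • i21 + ((1 : ℝ)/6) • i22 + ((-1 : ℝ)/6) • i23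

end Gen

section Helpers
variable {X Y : Type*} [AddCommGroup X] [Module ℝ X] [AddCommGroup Y] [Module ℝ Y]

theorem smul_cancelR {r : ℝ} (hr : r ≠ 0) {v : Y} (h : r • v = 0) : v = 0 := by
  have h2 := congrArg (fun w => r⁻¹ • w) h
  simpa [smul_smul, inv_mul_cancel₀ hr] using h2

theorem jensen_add {ψ : X → Y} (h0 : ψ 0 = 0)
    (hJ : ∀ u v : X, ψ (u + v) + ψ (u - v) = (2:ℝ) • ψ u) :
    ∀ u v : X, ψ (u + v) = ψ u + ψ v := by
  intro u v
  have h2 : ∀ w : X, ψ (w + w) = (2:ℝ) • ψ w := by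
    intro w
    have h := hJ w w
    rw [show (w - w : X) = 0 by module, h0] at h
    linear_combination (norm := module) h
  have key := hJ ((1/2:ℝ) • (u + v)) ((1/2:ℝ) • (u - v))
  rw [show ((1/2:ℝ) • (u+v) + (1/2:ℝ) • (u-v) : X) = u by module,
      show ((1/2:ℝ) • (u+v) - (1/2:ℝ) • (u-v) : X) = v by module] at key
  have h2' := h2 ((1/2:ℝ) • (u + v))
  rw [show ((1/2:ℝ) • (u+v) + (1/2:ℝ) • (u+v) : X) = u + v by module] at h2'
  linear_combination (norm := module) h2' - key

/-- polarization of a quadratic map is additive in the second variable -/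
theorem quad_polar_add {φ : X → Y}
    (hq : ∀ u v : X, φ (u + v) + φ (u - v) = (2:ℝ) • φ u + (2:ℝ) • φ v) :
    ∀ x y y' : X, φ (x + (y + y')) - φ (x - (y + y'))
      = (φ (x + y) - φ (x - y)) + (φ (x + y') - φ (x - y')) := by
  intro x y y'
  have h0 : φ (x + (0:X)) - φ (x - (0:X)) = 0 := by
    rw [show (x + (0:X) : X) = x by module, show (x - (0:X) : X) = x by module, sub_self]
  have hJ : ∀ u v : X, (φ (x + (u + v)) - φ (x - (u + v))) + (φ (x + (u - v)) - φ (x - (u - v)))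
      = (2:ℝ) • (φ (x + u) - φ (x - u)) := by
    intro u v
    have t1 := hq (x + u) v
    rw [show (x + u + v : X) = x + (u + v) by module,
        show (x + u - v : X) = x + (u - v) by module] at t1
    have t2 := hq (x - u) v
    rw [show (x - u + v : X) = x - (u - v) by module,
        show (x - u - v : X) = x - (u + v) by module] at t2
    linear_combination (norm := module) t1 - t2
  exact jensen_add (ψ := fun t => φ (x + t) - φ (x - t)) h0 hJ y y'

theorem quad_zero {φ : X → Y}
    (hq : ∀ u v : X, φ (u + v) + φ (u - v) = (2:ℝ) • φ u + (2:ℝ) • φ v) : φ 0 = 0 := by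
  have h := hq 0 0
  rw [show ((0:X) + 0 : X) = 0 by module, show ((0:X) - 0 : X) = 0 by module] at h
  have : (2:ℝ) • φ (0:X) = 0 := by linear_combination (norm := module) -h
  exact smul_cancelR two_ne_zero this

theorem quad_even {φ : X → Y}
    (hq : ∀ u v : X, φ (u + v) + φ (u - v) = (2:ℝ) • φ u + (2:ℝ) • φ v) :
    ∀ v : X, φ (-v) = φ v := by
  intro v
  have h := hq 0 v
  rw [show ((0:X) + v : X) = v by module, show ((0:X) - v : X) = -v by module,
      quad_zero hq] at h
  linear_combination (norm := module) h

end Helpers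

section Structs
variable {X Y : Type*} [AddCommGroup X] [Module ℝ X] [AddCommGroup Y] [Module ℝ Y]

noncomputable def polarB (g : X → Y) (x y : X) : Y := (1/4:ℝ) • (g (x+y) - g (x-y))

theorem quad_struct {g : X → Y} (hg : IsQuadratic g) :
    SymBiAdd (polarB g) ∧ ∀ x, g x = polarB g x x := by
  have hq : ∀ u v : X, g (u+v) + g (u-v) = (2:ℝ) • g u + (2:ℝ) • g v := by
    intro u v; have t := hg u v; linear_combination (norm := module) t
  have sym : ∀ x y : X, polarB g x y = polarB g y x := by
    intro x y
    simp only [polarB]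
    rw [show (y+x : X) = x+y by module, show (y-x:X) = -(x-y) by module, quad_even hq]
  have add2 : ∀ x y y' : X, polarB g x (y+y') = polarB g x y + polarB g x y' := by
    intro x y y'
    have key := quad_polar_add hq x y y'
    simp only [polarB]
    linear_combination (norm := module) (1/4:ℝ) • key
  refine ⟨⟨sym, ?_, add2⟩, ?_⟩
  · intro x x' y
    rw [sym (x+x') y, sym x y, sym x' y]; exact add2 y x x'
  · intro x
    have t := hq x x
    rw [show (x-x:X) = 0 by module, quad_zero hq] at t
    simp only [polarB]
    rw [show (x-x:X) = 0 by module, quad_zero hq]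
    linear_combination (norm := module) (-(1/4):ℝ) • t

noncomputable def polarC (c : X → Y) (x y z : X) : Y :=
  (1/24:ℝ) • (c (x+(y+z)) + c (x-(y+z)) - c (x+(y-z)) - c (x-(y-z)))

theorem cubic_struct {c : X → Y} (hc : IsCubic c) :
    SymTriAdd (polarC c) ∧ ∀ x, c x = polarC c x x x := by
  have c0 : c 0 = 0 := by
    have t := hc 0 0
    rw [show ((2:ℕ)•(0:X)+0 : X) = 0 by module, show ((2:ℕ)•(0:X)-0 : X) = 0 by module,
        show ((0:X)+0:X) = 0 by module, show ((0:X)-0:X) = 0 by module] at t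
    have h14 : (14:ℝ) • c (0:X) = 0 := by linear_combination (norm := module) -t
    exact smul_cancelR (by norm_num) h14
  have hodd : ∀ v : X, c (-v) = - c v := by
    intro v
    have t := hc 0 v
    rw [show ((2:ℕ)•(0:X)+v : X) = v by module, show ((2:ℕ)•(0:X)-v : X) = -v by module,
        show ((0:X)+v:X) = v by module, show ((0:X)-v:X) = -v by module, c0] at t
    linear_combination (norm := module) -t
  have c2 : ∀ x : X, c ((2:ℤ)•x) = (8:ℝ) • c x := by
    intro x
    have t := hc x 0
    rw [show ((2:ℕ)•x+0 : X) = (2:ℤ)•x by module, show ((2:ℕ)•x-0 : X) = (2:ℤ)•x by module,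
        show (x+(0:X):X) = x by module, show (x-(0:X):X) = x by module] at t
    linear_combination (norm := module) (1/2:ℝ) • t
  have c3 : ∀ x : X, c ((3:ℤ)•x) = (27:ℝ) • c x := by
    intro x
    have t := hc x x
    rw [show ((2:ℕ)•x+x : X) = (3:ℤ)•x by module, show ((2:ℕ)•x-x : X) = x by module,
        show (x+x:X) = (2:ℤ)•x by module, show (x-x:X) = 0 by module, c0] at t
    linear_combination (norm := module) t + (2:ℝ) • c2 x
  have hT := cubicE_quad hc hodd c0
  -- φ x := fun s => c (x+s) + c (x-s) - 2 c x  is quadratic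
  have hφ : ∀ x u v : X,
      (c (x+(u+v)) + c (x-(u+v)) - (2:ℝ) • c x) + (c (x+(u-v)) + c (x-(u-v)) - (2:ℝ) • c x)
      = (2:ℝ) • (c (x+u) + c (x-u) - (2:ℝ) • c x) + (2:ℝ) • (c (x+v) + c (x-v) - (2:ℝ) • c x) := by
    intro x u v
    have t := hT x u v
    rw [show (x+u+v:X) = x+(u+v) by module, show (x+u-v:X) = x+(u-v) by module,
        show (x-u+v:X) = x-(u-v) by module, show (x-u-v:X) = x-(u+v) by module] at t
    linear_combination (norm := module) t
  have add3 : ∀ x y z z' : X, polarC c x y (z+z') = polarC c x y z + polarC c x y z' := by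
    intro x y z z'
    have key := quad_polar_add (φ := fun s => c (x+s) + c (x-s) - (2:ℝ) • c x) (hφ x) y z z'
    simp only [polarC]
    linear_combination (norm := module) (1/24:ℝ) • key
  have s23 : ∀ x y z : X, polarC c x y z = polarC c x z y := by
    intro x y z
    simp only [polarC]
    rw [show (x+(z+y):X) = x+(y+z) by module, show (x-(z+y):X) = x-(y+z) by module,
        show (x+(z-y):X) = x-(y-z) by module, show (x-(z-y):X) = x+(y-z) by module]
    module
  have s12 : ∀ x y z : X, polarC c x y z = polarC c y x z := by
    intro x y z
    simp only [polarC]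
    rw [show (y+(x+z):X) = x+(y+z) by module,
        show (y-(x+z):X) = -(x-(y-z)) by module,
        show (y+(x-z):X) = x+(y-z) by module,
        show (y-(x-z):X) = -(x-(y+z)) by module,
        hodd (x-(y-z)), hodd (x-(y+z))]
    module
  have add2 : ∀ x y y' z : X, polarC c x (y+y') z = polarC c x y z + polarC c x y' z := by
    intro x y y' z
    rw [s23 x (y+y') z, add3 x z y y', s23 x y z, s23 x y' z]
  have add1 : ∀ x x' y z : X, polarC c (x+x') y z = polarC c x y z + polarC c x' y z := by
    intro x x' y z
    rw [s12 (x+x') y z, add2 y x x' z, s12 x y z, s12 x' y z]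
  refine ⟨⟨s12, s23, add1, add2, add3⟩, ?_⟩
  intro x
  simp only [polarC]
  rw [show (x+(x+x):X) = (3:ℤ)•x by module, show (x-(x+x):X) = -x by module,
      show (x+(x-x):X) = x by module, show (x-(x-x):X) = x by module, hodd x]
  linear_combination (norm := module) (-(1/24):ℝ) • c3 x

end Structs

section Quartic
variable {X Y : Type*} [AddCommGroup X] [Module ℝ X] [AddCommGroup Y] [Module ℝ Y]

noncomputable def polarF (h : X → Y) (a b : X) : Y :=
  h (a+b) + h (a-b) - (2:ℝ) • h a - (2:ℝ) • h b

noncomputable def polarG (h : X → Y) (u v s : X) : Y := polarF h (u+v) s - polarF h (u-v) s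

noncomputable def polarQ (h : X → Y) (x y z w : X) : Y :=
  (1/192:ℝ) • (polarG h z w (x+y) - polarG h z w (x-y))

theorem quartic_struct {h : X → Y} (hq : IsQuartic h) :
    SymQuadAdd (polarQ h) ∧ ∀ x, h x = polarQ h x x x x := by
  have h0 : h 0 = 0 := by
    have t := hq 0 0
    rw [show ((2:ℕ)•(0:X)+0 : X) = 0 by module, show ((2:ℕ)•(0:X)-0 : X) = 0 by module,
        show ((0:X)+0:X) = 0 by module, show ((0:X)-0:X) = 0 by module] at t
    have h24 : (24:ℝ) • h (0:X) = 0 := by linear_combination (norm := module) -t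
    exact smul_cancelR (by norm_num) h24
  have hev : ∀ v : X, h (-v) = h v := by
    intro v
    have t := hq 0 v
    rw [show ((2:ℕ)•(0:X)+v : X) = v by module, show ((2:ℕ)•(0:X)-v : X) = -v by module,
        show ((0:X)+v:X) = v by module, show ((0:X)-v:X) = -v by module, h0] at t
    have h3 : (3:ℝ) • (h (-v) - h v) = 0 := by linear_combination (norm := module) -t
    have := smul_cancelR (by norm_num : (3:ℝ) ≠ 0) h3
    linear_combination (norm := module) this
  have h2 : ∀ x : X, h ((2:ℤ)•x) = (16:ℝ) • h x := by
    intro x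
    have t := hq x 0
    rw [show ((2:ℕ)•x+0 : X) = (2:ℤ)•x by module, show ((2:ℕ)•x-0 : X) = (2:ℤ)•x by module,
        show (x+(0:X):X) = x by module, show (x-(0:X):X) = x by module, h0] at t
    linear_combination (norm := module) (1/2:ℝ) • t
  have h4 : ∀ x : X, h ((4:ℤ)•x) = (256:ℝ) • h x := by
    intro x
    have t := hq ((2:ℤ)•x) 0
    rw [show ((2:ℕ)•((2:ℤ)•x)+0 : X) = (4:ℤ)•x by module,
        show ((2:ℕ)•((2:ℤ)•x)-0 : X) = (4:ℤ)•x by module,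
        show ((2:ℤ)•x+(0:X):X) = (2:ℤ)•x by module,
        show ((2:ℤ)•x-(0:X):X) = (2:ℤ)•x by module, h0] at t
    linear_combination (norm := module) (1/2:ℝ) • t + (16:ℝ) • h2 x
  have hT := quarticF_quad hq hev h0
  -- F is quadratic in the first slot
  have Fq1 : ∀ s u v : X, polarF h (u+v) s + polarF h (u-v) s
      = (2:ℝ) • polarF h u s + (2:ℝ) • polarF h v s := by
    intro s u v
    have t := hT u v s
    simp only [polarF]
    linear_combination (norm := module) t
  have Fsym : ∀ a b : X, polarF h a b = polarF h b a := by
    intro a b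
    simp only [polarF]
    rw [show (b+a : X) = a+b by module, show (b-a:X) = -(a-b) by module, hev]
    module
  have Fq2 : ∀ a u v : X, polarF h a (u+v) + polarF h a (u-v)
      = (2:ℝ) • polarF h a u + (2:ℝ) • polarF h a v := by
    intro a u v
    rw [Fsym a (u+v), Fsym a (u-v), Fsym a u, Fsym a v]
    exact Fq1 a u v
  have Feven1 : ∀ a b : X, polarF h (-a) b = polarF h a b := by
    intro a b
    simp only [polarF]
    rw [show (-a+b : X) = -(a-b) by module, show (-a-b : X) = -(a+b) by module,
        hev (a-b), hev (a+b), hev a]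
    module
  have Feven2 : ∀ a b : X, polarF h a (-b) = polarF h a b := by
    intro a b; rw [Fsym a (-b), Feven1 b a, Fsym b a]
  -- ρ := polarG h z w  is quadratic
  have Gquad : ∀ z w u v : X, polarG h z w (u+v) + polarG h z w (u-v)
      = (2:ℝ) • polarG h z w u + (2:ℝ) • polarG h z w v := by
    intro z w u v
    simp only [polarG]
    linear_combination (norm := module) Fq2 (z+w) u v - Fq2 (z-w) u v
  have Geven : ∀ z w s : X, polarG h z w (-s) = polarG h z w s := by
    intro z w s
    simp only [polarG]
    rw [Feven2 (z+w) s, Feven2 (z-w) s]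
  have add2 : ∀ x y y' z w : X, polarQ h x (y+y') z w = polarQ h x y z w + polarQ h x y' z w := by
    intro x y y' z w
    have key := quad_polar_add (φ := polarG h z w) (Gquad z w) x y y'
    simp only [polarQ]
    linear_combination (norm := module) (1/192:ℝ) • key
  have s12 : ∀ x y z w : X, polarQ h x y z w = polarQ h y x z w := by
    intro x y z w
    simp only [polarQ]
    rw [show (y+x : X) = x+y by module, show (y-x : X) = -(x-y) by module, Geven]
  have add1 : ∀ x x' y z w : X, polarQ h (x+x') y z w = polarQ h x y z w + polarQ h x' y z w := by
    intro x x' y z w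
    rw [s12 (x+x') y z w, add2 y x x' z w, s12 x y z w, s12 x' y z w]
  have add4 : ∀ x y z w w' : X, polarQ h x y z (w+w') = polarQ h x y z w + polarQ h x y z w' := by
    intro x y z w w'
    have k1 := quad_polar_add (φ := fun a => polarF h a (x+y)) (fun u v => Fq1 (x+y) u v) z w w'
    have k2 := quad_polar_add (φ := fun a => polarF h a (x-y)) (fun u v => Fq1 (x-y) u v) z w w'
    simp only [polarQ, polarG]
    linear_combination (norm := module) (1/192:ℝ) • k1 - (1/192:ℝ) • k2
  have s34 : ∀ x y z w : X, polarQ h x y z w = polarQ h x y w z := by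
    intro x y z w
    simp only [polarQ, polarG]
    rw [show (w+z : X) = z+w by module, show (w-z : X) = -(z-w) by module,
        Feven1 (z-w) (x+y), Feven1 (z-w) (x-y)]
  have add3 : ∀ x y z z' w : X, polarQ h x y (z+z') w = polarQ h x y z w + polarQ h x y z' w := by
    intro x y z z' w
    rw [s34 x y (z+z') w, add4 x y w z z', s34 x y z w, s34 x y z' w]
  have Qalt : ∀ x y z w : X, polarQ h x y z w
      = (1/192:ℝ) • (h (x+y+z+w) - h (x+y+z-w) - h (x+y-z+w) + h (x+y-z-w)
          - h (x-y+z+w) + h (x-y+z-w) + h (x-y-z+w) - h (x-y-z-w)) := by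
    intro x y z w
    simp only [polarQ, polarG, polarF]
    rw [show (z+w+(x+y) : X) = x+y+z+w by module,
        show (z+w-(x+y) : X) = -(x+y-z-w) by module,
        show (z-w+(x+y) : X) = x+y+z-w by module,
        show (z-w-(x+y) : X) = -(x+y-z+w) by module,
        show (z+w+(x-y) : X) = x-y+z+w by module,
        show (z+w-(x-y) : X) = -(x-y-z-w) by module,
        show (z-w+(x-y) : X) = x-y+z-w by module,
        show (z-w-(x-y) : X) = -(x-y-z+w) by module,
        hev (x+y-z-w), hev (x+y-z+w), hev (x-y-z-w), hev (x-y-z+w)]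
    module
  have s23 : ∀ x y z w : X, polarQ h x y z w = polarQ h x z y w := by
    intro x y z w
    rw [Qalt x y z w, Qalt x z y w]
    rw [show (x+z+y+w : X) = x+y+z+w by module, show (x+z+y-w : X) = x+y+z-w by module,
        show (x+z-y+w : X) = x-y+z+w by module, show (x+z-y-w : X) = x-y+z-w by module,
        show (x-z+y+w : X) = x+y-z+w by module, show (x-z+y-w : X) = x+y-z-w by module,
        show (x-z-y+w : X) = x-y-z+w by module, show (x-z-y-w : X) = x-y-z-w by module]
    module
  refine ⟨⟨s12, s23, s34, add1, add2, add3, add4⟩, ?_⟩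
  intro x
  rw [Qalt x x x x]
  rw [show (x+x+x+x : X) = (4:ℤ)•x by module, show (x+x+x-x : X) = (2:ℤ)•x by module,
      show (x+x-x+x : X) = (2:ℤ)•x by module, show (x+x-x-x : X) = 0 by module,
      show (x-x+x+x : X) = (2:ℤ)•x by module, show (x-x+x-x : X) = 0 by module,
      show (x-x-x+x : X) = 0 by module, show (x-x-x-x : X) = -((2:ℤ)•x) by module,
      h0, hev ((2:ℤ)•x)]
  linear_combination (norm := module) (-(1/192):ℝ) • h4 x + (4/192 : ℝ) • h2 x
end Quartic

section Forward
variable {X Y : Type*} [AddCommGroup X] [Module ℝ X] [AddCommGroup Y] [Module ℝ Y]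

theorem mixed_zero {f : X → Y} (hf : MixedEq f) : f 0 = 0 := by
  have t := hf 0 0
  rw [show ((0:X)+2•(0:X) : X) = 0 by module, show ((0:X)-2•(0:X):X) = 0 by module,
      show ((0:X)+0:X) = 0 by module, show ((0:X)-0:X) = 0 by module,
      show ((3:ℕ)•(0:X):X) = (0:X) by module, show ((2:ℕ)•(0:X):X) = (0:X) by module] at t
  have h22 : (22:ℝ) • f (0:X) = 0 := by linear_combination (norm := module) -t
  exact smul_cancelR (by norm_num) h22

theorem mixed_neg {f : X → Y} (hf : MixedEq f) : MixedEq (fun v : X => f (-v)) := by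
  intro x y
  simp only []
  have t := hf (-x) (-y)
  rw [show (-x + 2•(-y) : X) = -(x + 2•y) by module,
      show (-x - 2•(-y) : X) = -(x - 2•y) by module,
      show (-x + -y : X) = -(x+y) by module,
      show (-x - -y : X) = -(x-y) by module,
      show ((3:ℕ)•(-y) : X) = -(3•y) by module,
      show ((2:ℕ)•(-y) : X) = -(2•y) by module] at t
  exact t

theorem mixed_comb (a b : ℝ) {g k : X → Y} (hg : MixedEq g) (hk : MixedEq k) :
    MixedEq (fun v : X => a • g v + b • k v) := by
  intro x y
  simp only []
  linear_combination (norm := module) a • hg x y + b • hk x y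

theorem mixed_forward {f : X → Y} (hf : MixedEq f) :
    ∃ (Q₁ : X → X → Y) (C : X → X → X → Y) (Q₂ : X → X → X → X → Y),
      SymBiAdd Q₁ ∧ SymTriAdd C ∧ SymQuadAdd Q₂ ∧
      ∀ x : X, f x = Q₁ x x + C x x x + Q₂ x x x x := by
  have f0 := mixed_zero hf
  have hneg := mixed_neg hf
  -- odd part
  have ho : MixedEq (fun v : X => (1/2:ℝ) • f v + (-(1/2):ℝ) • f (-v)) :=
    mixed_comb (1/2) (-(1/2)) hf hneg
  have hodd : ∀ v : X, (fun v : X => (1/2:ℝ) • f v + (-(1/2):ℝ) • f (-v)) (-v)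
      = -(fun v : X => (1/2:ℝ) • f v + (-(1/2):ℝ) • f (-v)) v := by
    intro v; simp only []; rw [neg_neg]; module
  have hzo : (fun v : X => (1/2:ℝ) • f v + (-(1/2):ℝ) • f (-v)) 0 = 0 := by
    simp only []; rw [neg_zero, f0]; module
  have hcub := cubic_of_mixed_odd ho hodd hzo
  -- even part
  have he : MixedEq (fun v : X => (1/2:ℝ) • f v + (1/2:ℝ) • f (-v)) :=
    mixed_comb (1/2) (1/2) hf hneg
  have hev : ∀ v : X, (fun v : X => (1/2:ℝ) • f v + (1/2:ℝ) • f (-v)) (-v)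
      = (fun v : X => (1/2:ℝ) • f v + (1/2:ℝ) • f (-v)) v := by
    intro v; simp only []; rw [neg_neg]; module
  have hze : (fun v : X => (1/2:ℝ) • f v + (1/2:ℝ) • f (-v)) 0 = 0 := by
    simp only []; rw [neg_zero, f0]; module
  have hQP := quadpart_of_mixed_even he hev hze
  have hRP := quartpart_of_mixed_even he hev hze
  have hg : IsQuadratic (fun v : X => (2/3:ℝ) • f v + (2/3:ℝ) • f (-v)
      - (1/24:ℝ) • f ((2:ℤ)•v) - (1/24:ℝ) • f (-((2:ℤ)•v))) := by
    intro x y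
    simp only []
    have k := hQP x y
    rw [show ((2:ℤ)•(x+y) : X) = (2:ℤ)•x + (2:ℤ)•y by module,
        show ((2:ℤ)•(x-y) : X) = (2:ℤ)•x - (2:ℤ)•y by module]
    linear_combination (norm := module) (-(1/12):ℝ) • k
  have hh : IsQuartic (fun v : X => (1/24:ℝ) • f ((2:ℤ)•v) + (1/24:ℝ) • f (-((2:ℤ)•v))
      - (1/6:ℝ) • f v - (1/6:ℝ) • f (-v)) := by
    intro x y
    simp only []
    have k := hRP x y
    rw [show ((2:ℤ)•(2•x+y) : X) = (4:ℤ)•x + (2:ℤ)•y by module,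
        show ((2:ℤ)•(2•x-y) : X) = (4:ℤ)•x - (2:ℤ)•y by module,
        show ((2:ℤ)•(x+y) : X) = (2:ℤ)•x + (2:ℤ)•y by module,
        show ((2:ℤ)•(x-y) : X) = (2:ℤ)•x - (2:ℤ)•y by module,
        show ((2:ℕ)•x+y : X) = (2:ℤ)•x + y by module,
        show ((2:ℕ)•x-y : X) = (2:ℤ)•x - y by module]
    linear_combination (norm := module) (1/12:ℝ) • k
  obtain ⟨hBs, hBd⟩ := quad_struct hg
  obtain ⟨hCs, hCd⟩ := cubic_struct hcub
  obtain ⟨hQs, hQd⟩ := quartic_struct hh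
  refine ⟨_, _, _, hBs, hCs, hQs, ?_⟩
  intro x
  have e1 := hBd x
  have e2 := hCd x
  have e3 := hQd x
  linear_combination (norm := module) e1 + e2 + e3

end Forward

section Eval
variable {X Y : Type*} [AddCommGroup X] [Module ℝ X] [AddCommGroup Y] [Module ℝ Y]

theorem bi_eval {B : X → X → Y} (hB : SymBiAdd B) (m n : ℤ) (x y : X) :
    B (m•x + n•y) (m•x + n•y)
      = (m*m) • B x x + (2*(m*n)) • B x y + (n*n) • B y y := by
  obtain ⟨sym, a1, a2⟩ := hB
  have z1 : ∀ (k:ℤ) (u v : X), B (k•u) v = k • B u v := fun k u v =>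
    (AddMonoidHom.mk' (fun t => B t v) (fun p q => a1 p q v)).map_zsmul k u
  have z2 : ∀ (k:ℤ) (u v : X), B u (k•v) = k • B u v := fun k u v =>
    (AddMonoidHom.mk' (fun t => B u t) (fun p q => a2 u p q)).map_zsmul k v
  rw [a1 (m•x) (n•y) (m•x + n•y), z1 m x, z1 n y,
      a2 x (m•x) (n•y), a2 y (m•x) (n•y),
      z2 m x x, z2 n x y, z2 m y x, z2 n y y, sym y x]
  module

theorem tri_eval {C : X → X → X → Y} (hC : SymTriAdd C) (m n : ℤ) (x y : X) :
    C (m•x+n•y) (m•x+n•y) (m•x+n•y)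
      = (m*m*m) • C x x x + (3*(m*m*n)) • C x x y + (3*(m*(n*n))) • C x y y
        + (n*n*n) • C y y y := by
  obtain ⟨s12, s23, a1, a2, a3⟩ := hC
  have z1 : ∀ (k:ℤ) (u v w : X), C (k•u) v w = k • C u v w := fun k u v w =>
    (AddMonoidHom.mk' (fun t => C t v w) (fun p q => a1 p q v w)).map_zsmul k u
  have z2 : ∀ (k:ℤ) (u v w : X), C u (k•v) w = k • C u v w := fun k u v w =>
    (AddMonoidHom.mk' (fun t => C u t w) (fun p q => a2 u p q w)).map_zsmul k v
  have z3 : ∀ (k:ℤ) (u v w : X), C u v (k•w) = k • C u v w := fun k u v w =>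
    (AddMonoidHom.mk' (fun t => C u v t) (fun p q => a3 u v p q)).map_zsmul k w
  rw [a1 (m•x) (n•y) (m•x+n•y) (m•x+n•y), z1 m x, z1 n y,
      a2 x (m•x) (n•y) (m•x+n•y), a2 y (m•x) (n•y) (m•x+n•y),
      z2 m x x, z2 n x y, z2 m y x, z2 n y y,
      a3 x x (m•x) (n•y), a3 x y (m•x) (n•y), a3 y x (m•x) (n•y), a3 y y (m•x) (n•y),
      z3 m x x x, z3 n x x y, z3 m x y x, z3 n x y y,
      z3 m y x x, z3 n y x y, z3 m y y x, z3 n y y y,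
      s23 x y x, s12 y x x, s23 x y x, s12 y x y, s23 y y x, s12 y x y]
  module

theorem quad_eval {Q : X → X → X → X → Y} (hQ : SymQuadAdd Q) (m n : ℤ) (x y : X) :
    Q (m•x+n•y) (m•x+n•y) (m•x+n•y) (m•x+n•y)
      = (m*m*(m*m)) • Q x x x x + (4*(m*m*(m*n))) • Q x x x y
        + (6*(m*m*(n*n))) • Q x x y y + (4*(m*n*(n*n))) • Q x y y y
        + (n*n*(n*n)) • Q y y y y := by
  obtain ⟨s12, s23, s34, a1, a2, a3, a4⟩ := hQ
  have z1 : ∀ (k:ℤ) (u v w r : X), Q (k•u) v w r = k • Q u v w r := fun k u v w r =>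
    (AddMonoidHom.mk' (fun t => Q t v w r) (fun p q => a1 p q v w r)).map_zsmul k u
  have z2 : ∀ (k:ℤ) (u v w r : X), Q u (k•v) w r = k • Q u v w r := fun k u v w r =>
    (AddMonoidHom.mk' (fun t => Q u t w r) (fun p q => a2 u p q w r)).map_zsmul k v
  have z3 : ∀ (k:ℤ) (u v w r : X), Q u v (k•w) r = k • Q u v w r := fun k u v w r =>
    (AddMonoidHom.mk' (fun t => Q u v t r) (fun p q => a3 u v p q r)).map_zsmul k w
  have z4 : ∀ (k:ℤ) (u v w r : X), Q u v w (k•r) = k • Q u v w r := fun k u v w r =>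
    (AddMonoidHom.mk' (fun t => Q u v w t) (fun p q => a4 u v w p q)).map_zsmul k r
  set s : X := m•x+n•y with hs
  rw [a1 (m•x) (n•y) s s s, z1 m x, z1 n y,
      a2 x (m•x) (n•y) s s, a2 y (m•x) (n•y) s s,
      z2 m x x, z2 n x y, z2 m y x, z2 n y y,
      a3 x x (m•x) (n•y) s, a3 x y (m•x) (n•y) s, a3 y x (m•x) (n•y) s, a3 y y (m•x) (n•y) s,
      z3 m x x x, z3 n x x y, z3 m x y x, z3 n x y y,
      z3 m y x x, z3 n y x y, z3 m y y x, z3 n y y y,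
      a4 x x x (m•x) (n•y), a4 x x y (m•x) (n•y), a4 x y x (m•x) (n•y), a4 x y y (m•x) (n•y),
      a4 y x x (m•x) (n•y), a4 y x y (m•x) (n•y), a4 y y x (m•x) (n•y), a4 y y y (m•x) (n•y),
      z4 m x x x x, z4 n x x x y, z4 m x x y x, z4 n x x y y,
      z4 m x y x x, z4 n x y x y, z4 m x y y x, z4 n x y y y,
      z4 m y x x x, z4 n y x x y, z4 m y x y x, z4 n y x y y,
      z4 m y y x x, z4 n y y x y, z4 m y y y x, z4 n y y y y,
      s34 x x y x, s23 x y x x, s34 x x y x, s23 x y x y, s34 x y y x, s23 x y x y,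
      s12 y x x x, s23 x y x x, s34 x x y x, s12 y x x y, s23 x y x y, s12 y x y x,
      s34 x y y x, s23 x y x y, s12 y x y y, s23 y y x x, s12 y x y x, s34 x y y x,
      s23 x y x y, s23 y y x y, s12 y x y y, s34 y y y x, s23 y y x y, s12 y x y y]
  module

end Eval

section Converse
variable {X Y : Type*} [AddCommGroup X] [Module ℝ X] [AddCommGroup Y] [Module ℝ Y]

theorem bi_mixed {B : X → X → Y} (hB : SymBiAdd B) : MixedEq (fun v : X => B v v) := by
  intro x y
  simp only []
  have E1 := bi_eval hB 1 2 x y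
  rw [show ((1:ℤ)•x + (2:ℤ)•y : X) = x + 2•y by module] at E1
  have E2 := bi_eval hB 1 (-2) x y
  rw [show ((1:ℤ)•x + (-2:ℤ)•y : X) = x - 2•y by module] at E2
  have E3 := bi_eval hB 1 1 x y
  rw [show ((1:ℤ)•x + (1:ℤ)•y : X) = x + y by module] at E3
  have E4 := bi_eval hB 1 (-1) x y
  rw [show ((1:ℤ)•x + (-1:ℤ)•y : X) = x - y by module] at E4
  have E5 := bi_eval hB 0 3 x y
  rw [show ((0:ℤ)•x + (3:ℤ)•y : X) = 3•y by module] at E5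
  have E6 := bi_eval hB 0 2 x y
  rw [show ((0:ℤ)•x + (2:ℤ)•y : X) = 2•y by module] at E6
  rw [E1, E2, E3, E4, E5, E6]
  module

theorem tri_mixed {C : X → X → X → Y} (hC : SymTriAdd C) : MixedEq (fun v : X => C v v v) := by
  intro x y
  simp only []
  have E1 := tri_eval hC 1 2 x y
  rw [show ((1:ℤ)•x + (2:ℤ)•y : X) = x + 2•y by module] at E1
  have E2 := tri_eval hC 1 (-2) x y
  rw [show ((1:ℤ)•x + (-2:ℤ)•y : X) = x - 2•y by module] at E2
  have E3 := tri_eval hC 1 1 x y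
  rw [show ((1:ℤ)•x + (1:ℤ)•y : X) = x + y by module] at E3
  have E4 := tri_eval hC 1 (-1) x y
  rw [show ((1:ℤ)•x + (-1:ℤ)•y : X) = x - y by module] at E4
  have E5 := tri_eval hC 0 3 x y
  rw [show ((0:ℤ)•x + (3:ℤ)•y : X) = 3•y by module] at E5
  have E6 := tri_eval hC 0 2 x y
  rw [show ((0:ℤ)•x + (2:ℤ)•y : X) = 2•y by module] at E6
  rw [E1, E2, E3, E4, E5, E6]
  module

theorem quad_mixed {Q : X → X → X → X → Y} (hQ : SymQuadAdd Q) :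
    MixedEq (fun v : X => Q v v v v) := by
  intro x y
  simp only []
  have E1 := quad_eval hQ 1 2 x y
  rw [show ((1:ℤ)•x + (2:ℤ)•y : X) = x + 2•y by module] at E1
  have E2 := quad_eval hQ 1 (-2) x y
  rw [show ((1:ℤ)•x + (-2:ℤ)•y : X) = x - 2•y by module] at E2
  have E3 := quad_eval hQ 1 1 x y
  rw [show ((1:ℤ)•x + (1:ℤ)•y : X) = x + y by module] at E3
  have E4 := quad_eval hQ 1 (-1) x y
  rw [show ((1:ℤ)•x + (-1:ℤ)•y : X) = x - y by module] at E4
  have E5 := quad_eval hQ 0 3 x y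
  rw [show ((0:ℤ)•x + (3:ℤ)•y : X) = 3•y by module] at E5
  have E6 := quad_eval hQ 0 2 x y
  rw [show ((0:ℤ)•x + (2:ℤ)•y : X) = 2•y by module] at E6
  rw [E1, E2, E3, E4, E5, E6]
  module

theorem mixed_backward {f : X → Y} {Q₁ : X → X → Y} {C : X → X → X → Y}
    {Q₂ : X → X → X → X → Y} (hB : SymBiAdd Q₁) (hC : SymTriAdd C) (hQ : SymQuadAdd Q₂)
    (hrep : ∀ x : X, f x = Q₁ x x + C x x x + Q₂ x x x x) : MixedEq f := by
  intro x y
  have m1 := bi_mixed hB x y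
  have m2 := tri_mixed hC x y
  have m3 := quad_mixed hQ x y
  simp only [] at m1 m2 m3
  rw [hrep (x + 2•y), hrep (x - 2•y), hrep (x+y), hrep (x-y), hrep (3•y), hrep (2•y),
      hrep y, hrep x]
  linear_combination (norm := module) m1 + m2 + m3

end Converse

section Uniqueness
variable {X Y : Type*} [AddCommGroup X] [Module ℝ X] [AddCommGroup Y] [Module ℝ Y]

theorem bi_of_diag_zero {B : X → X → Y} (hB : SymBiAdd B) (hd : ∀ x, B x x = 0) :
    ∀ x y, B x y = 0 := by
  intro x y
  have E := bi_eval hB 1 1 x y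
  rw [show ((1:ℤ)•x + (1:ℤ)•y : X) = x + y by module, hd (x+y), hd x, hd y] at E
  have h2 : (2:ℝ) • B x y = 0 := by linear_combination (norm := module) -E
  exact smul_cancelR two_ne_zero h2

theorem tri_of_diag_zero {C : X → X → X → Y} (hC : SymTriAdd C) (hd : ∀ x, C x x x = 0) :
    ∀ x y z, C x y z = 0 := by
  have step : ∀ x y : X, C x y y = 0 := by
    intro x y
    have E1 := tri_eval hC 1 1 x y
    rw [show ((1:ℤ)•x + (1:ℤ)•y : X) = x + y by module, hd (x+y), hd x, hd y] at E1
    have E2 := tri_eval hC 1 (-1) x y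
    rw [show ((1:ℤ)•x + (-1:ℤ)•y : X) = x - y by module, hd (x-y), hd x, hd y] at E2
    have h6 : (6:ℝ) • C x y y = 0 := by linear_combination (norm := module) -E1 - E2
    exact smul_cancelR (by norm_num) h6
  intro x y z
  obtain ⟨s12, s23, a1, a2, a3⟩ := hC
  have E : C x (y+z) (y+z) = 0 := step x (y+z)
  rw [a2 x y z (y+z), a3 x y y z, a3 x z y z, s23 x z y, step x y, step x z] at E
  have h2 : (2:ℝ) • C x y z = 0 := by linear_combination (norm := module) E
  exact smul_cancelR two_ne_zero h2

theorem quad_of_diag_zero {Q : X → X → X → X → Y} (hQ : SymQuadAdd Q)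
    (hd : ∀ x, Q x x x x = 0) : ∀ x y z w, Q x y z w = 0 := by
  have step1 : ∀ x y : X, Q x x y y = 0 := by
    intro x y
    have E1 := quad_eval hQ 1 1 x y
    rw [show ((1:ℤ)•x + (1:ℤ)•y : X) = x + y by module, hd (x+y), hd x, hd y] at E1
    have E2 := quad_eval hQ 1 (-1) x y
    rw [show ((1:ℤ)•x + (-1:ℤ)•y : X) = x - y by module, hd (x-y), hd x, hd y] at E2
    have h12 : (12:ℝ) • Q x x y y = 0 := by linear_combination (norm := module) -E1 - E2
    exact smul_cancelR (by norm_num) h12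
  obtain ⟨s12, s23, s34, a1, a2, a3, a4⟩ := hQ
  have step2 : ∀ x z w : X, Q x x z w = 0 := by
    intro x z w
    have E : Q x x (z+w) (z+w) = 0 := step1 x (z+w)
    rw [a3 x x z w (z+w), a4 x x z z w, a4 x x w z w, s34 x x w z,
        step1 x z, step1 x w] at E
    have h2 : (2:ℝ) • Q x x z w = 0 := by linear_combination (norm := module) E
    exact smul_cancelR two_ne_zero h2
  intro x y z w
  have E : Q (x+y) (x+y) z w = 0 := step2 (x+y) z w
  rw [a1 x y (x+y) z w, a2 x x y z w, a2 y x y z w, s12 y x z w,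
      step2 x z w, step2 y z w] at E
  have h2 : (2:ℝ) • Q x y z w = 0 := by linear_combination (norm := module) E
  exact smul_cancelR two_ne_zero h2

theorem symBiAdd_sub {B B' : X → X → Y} (h : SymBiAdd B) (h' : SymBiAdd B') :
    SymBiAdd (fun x y => B x y - B' x y) := by
  refine ⟨fun x y => ?_, fun x x' y => ?_, fun x y y' => ?_⟩ <;> simp only []
  · rw [h.1 x y, h'.1 x y]
  · rw [h.2.1 x x' y, h'.2.1 x x' y]; abel
  · rw [h.2.2 x y y', h'.2.2 x y y']; abel

theorem symTriAdd_sub {C C' : X → X → X → Y} (h : SymTriAdd C) (h' : SymTriAdd C') :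
    SymTriAdd (fun x y z => C x y z - C' x y z) := by
  obtain ⟨s12, s23, a1, a2, a3⟩ := h
  obtain ⟨s12', s23', a1', a2', a3'⟩ := h'
  refine ⟨fun x y z => ?_, fun x y z => ?_, fun x x' y z => ?_, fun x y y' z => ?_,
    fun x y z z' => ?_⟩ <;> simp only []
  · rw [s12 x y z, s12' x y z]
  · rw [s23 x y z, s23' x y z]
  · rw [a1 x x' y z, a1' x x' y z]; abel
  · rw [a2 x y y' z, a2' x y y' z]; abel
  · rw [a3 x y z z', a3' x y z z']; abel

theorem symQuadAdd_sub {Q Q' : X → X → X → X → Y} (h : SymQuadAdd Q) (h' : SymQuadAdd Q') :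
    SymQuadAdd (fun x y z w => Q x y z w - Q' x y z w) := by
  obtain ⟨s12, s23, s34, a1, a2, a3, a4⟩ := h
  obtain ⟨s12', s23', s34', a1', a2', a3', a4'⟩ := h'
  refine ⟨fun x y z w => ?_, fun x y z w => ?_, fun x y z w => ?_, fun x x' y z w => ?_,
    fun x y y' z w => ?_, fun x y z z' w => ?_, fun x y z w w' => ?_⟩ <;> simp only []
  · rw [s12 x y z w, s12' x y z w]
  · rw [s23 x y z w, s23' x y z w]
  · rw [s34 x y z w, s34' x y z w]
  · rw [a1 x x' y z w, a1' x x' y z w]; abel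
  · rw [a2 x y y' z w, a2' x y y' z w]; abel
  · rw [a3 x y z z' w, a3' x y z z' w]; abel
  · rw [a4 x y z w w', a4' x y z w w']; abel

theorem diag_sum_zero {B : X → X → Y} {C : X → X → X → Y} {Q : X → X → X → X → Y}
    (hB : SymBiAdd B) (hC : SymTriAdd C) (hQ : SymQuadAdd Q)
    (hd : ∀ x : X, B x x + C x x x + Q x x x x = 0) :
    (∀ x y, B x y = 0) ∧ (∀ x y z, C x y z = 0) ∧ (∀ x y z w, Q x y z w = 0) := by
  have trio : ∀ x : X, B x x = 0 ∧ C x x x = 0 ∧ Q x x x x = 0 := by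
    intro x
    have v1 := hd x
    have v2 := hd ((2:ℤ)•x)
    have v3 := hd ((4:ℤ)•x)
    have b2 := bi_eval hB 2 0 x x
    rw [show ((2:ℤ)•x + (0:ℤ)•x : X) = (2:ℤ)•x by module] at b2
    have c2 := tri_eval hC 2 0 x x
    rw [show ((2:ℤ)•x + (0:ℤ)•x : X) = (2:ℤ)•x by module] at c2
    have q2 := quad_eval hQ 2 0 x x
    rw [show ((2:ℤ)•x + (0:ℤ)•x : X) = (2:ℤ)•x by module] at q2
    have b4 := bi_eval hB 4 0 x x
    rw [show ((4:ℤ)•x + (0:ℤ)•x : X) = (4:ℤ)•x by module] at b4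
    have c4 := tri_eval hC 4 0 x x
    rw [show ((4:ℤ)•x + (0:ℤ)•x : X) = (4:ℤ)•x by module] at c4
    have q4 := quad_eval hQ 4 0 x x
    rw [show ((4:ℤ)•x + (0:ℤ)•x : X) = (4:ℤ)•x by module] at q4
    rw [b2, c2, q2] at v2
    rw [b4, c4, q4] at v3
    refine ⟨?_, ?_, ?_⟩
    · linear_combination (norm := module) (8/3:ℝ)•v1 - (1/2:ℝ)•v2 + (1/48:ℝ)•v3
    · linear_combination (norm := module) (-2:ℝ)•v1 + (5/8:ℝ)•v2 - (1/32:ℝ)•v3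
    · linear_combination (norm := module) (1/3:ℝ)•v1 - (1/8:ℝ)•v2 + (1/96:ℝ)•v3
  exact ⟨bi_of_diag_zero hB (fun x => (trio x).1),
    tri_of_diag_zero hC (fun x => (trio x).2.1),
    quad_of_diag_zero hQ (fun x => (trio x).2.2)⟩

theorem uniq_sub {Q₁ Q₁' : X → X → Y} {C C' : X → X → X → Y} {Q₂ Q₂' : X → X → X → X → Y}
    (hB : SymBiAdd Q₁) (hC : SymTriAdd C) (hQ : SymQuadAdd Q₂)
    (hB' : SymBiAdd Q₁') (hC' : SymTriAdd C') (hQ' : SymQuadAdd Q₂')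
    (hd : ∀ x : X, Q₁ x x + C x x x + Q₂ x x x x = Q₁' x x + C' x x x + Q₂' x x x x) :
    Q₁ = Q₁' ∧ C = C' ∧ Q₂ = Q₂' := by
  have hBd := symBiAdd_sub hB hB'
  have hCd := symTriAdd_sub hC hC'
  have hQd := symQuadAdd_sub hQ hQ'
  have hdd : ∀ x : X, (fun a b => Q₁ a b - Q₁' a b) x x
      + (fun a b c => C a b c - C' a b c) x x x
      + (fun a b c d => Q₂ a b c d - Q₂' a b c d) x x x x = 0 := by
    intro x
    simp only []
    linear_combination (norm := module) hd x
  obtain ⟨e1, e2, e3⟩ := diag_sum_zero hBd hCd hQd hdd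
  refine ⟨?_, ?_, ?_⟩
  · funext a b
    have := e1 a b
    exact sub_eq_zero.mp this
  · funext a b c
    have := e2 a b c
    exact sub_eq_zero.mp this
  · funext a b c d
    have := e3 a b c d
    exact sub_eq_zero.mp this

end Uniqueness


theorem stmt_0 {X Y : Type*} [AddCommGroup X] [Module ℝ X] [AddCommGroup Y] [Module ℝ Y]
    (f : X → Y) :
    (MixedEq f ↔
      ∃ (Q₁ : X → X → Y) (C : X → X → X → Y) (Q₂ : X → X → X → X → Y),
        SymBiAdd Q₁ ∧ SymTriAdd C ∧ SymQuadAdd Q₂ ∧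
        ∀ x : X, f x = Q₁ x x + C x x x + Q₂ x x x x) ∧
    (∀ (Q₁ Q₁' : X → X → Y) (C C' : X → X → X → Y) (Q₂ Q₂' : X → X → X → X → Y),
      SymBiAdd Q₁ → SymTriAdd C → SymQuadAdd Q₂ →
      SymBiAdd Q₁' → SymTriAdd C' → SymQuadAdd Q₂' →
      (∀ x : X, f x = Q₁ x x + C x x x + Q₂ x x x x) →
      (∀ x : X, f x = Q₁' x x + C' x x x + Q₂' x x x x) →
      Q₁ = Q₁' ∧ C = C' ∧ Q₂ = Q₂') := by
  constructor
  · constructor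
    · intro hf
      exact mixed_forward hf
    · rintro ⟨Q₁, C, Q₂, hB, hC, hQ, hrep⟩
      exact mixed_backward hB hC hQ hrep
  · intro Q₁ Q₁' C C' Q₂ Q₂' hB hC hQ hB' hC' hQ' h1 h2
    exact uniq_sub hB hC hQ hB' hC' hQ' (fun x => (h1 x).symm.trans (h2 x))
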